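/- arXiv:2110.07350 — 8 statements merged into one kernel-verified Lean document; each statement's English description precedes it below -/
import Mathlib

section
/- Let $\{\ell_n\}$ be a decreasing sequence of reals with $0<\ell_n<1$ and let $m>0$. Then the condition $\limsup_{n\to\infty} (\ell_1+\cdots+\ell_n)/\ln n \geq 1/m$ holds if and only if for every $a>m$ the series $\sum_{n=1}^\infty n^{-2} e^{a(\ell_1+\cdots+\ell_n)}$ diverges. -/
open Filter Finset

lemma aux_main (S : ℕ → ℝ) (hSmono : Monotone S) (hS0 : ∀ n, 0 ≤ S n)
    (m : ℝ) (hm : 0 < m) :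
    (((1 / m : ℝ) : EReal) ≤
      Filter.limsup (fun n : ℕ => ((S n / Real.log n : ℝ) : EReal)) atTop)
    ↔ ∀ a : ℝ, m < a →
        ¬ Summable (fun n : ℕ => (1 / (n : ℝ) ^ 2) * Real.exp (a * S n)) := by
  constructor
  · intro h a ha hsum
    have ha0 : 0 < a := hm.trans ha
    set T := ∑' n : ℕ, (1 / (n : ℝ) ^ 2) * Real.exp (a * S n) with hT
    have hterm_nonneg : ∀ n : ℕ, 0 ≤ (1 / (n : ℝ) ^ 2) * Real.exp (a * S n) := by
      intro n; positivity
    have hTpos : 0 < T := by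
      have h1 : (1 / ((1:ℕ) : ℝ) ^ 2) * Real.exp (a * S 1) ≤ T := Summable.le_tsum hsum 1
        (fun k _ => hterm_nonneg k)
      have : (0:ℝ) < (1 / ((1:ℕ) : ℝ) ^ 2) * Real.exp (a * S 1) := by positivity
      linarith
    have key : ∀ n : ℕ, 1 ≤ n → Real.exp (a * S n) ≤ 4 * T * n := by
      intro n hn
      have hn0 : (0:ℝ) < n := by exact_mod_cast hn
      have h2 : ∑ k ∈ Finset.Icc n (2*n), (1 / (k : ℝ) ^ 2) * Real.exp (a * S k) ≤ T :=
        Summable.sum_le_tsum _ (fun k _ => hterm_nonneg k) hsum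
      have h1 : ∑ k ∈ Finset.Icc n (2*n), (1 / ((2*n : ℕ) : ℝ) ^ 2) * Real.exp (a * S n)
          ≤ ∑ k ∈ Finset.Icc n (2*n), (1 / (k : ℝ) ^ 2) * Real.exp (a * S k) := by
        apply Finset.sum_le_sum
        intro k hk
        rw [Finset.mem_Icc] at hk
        have hk0 : (0:ℝ) < k := by
          have : 1 ≤ k := le_trans hn hk.1
          exact_mod_cast this
        have hkle : (k:ℝ) ≤ ((2*n : ℕ) : ℝ) := by exact_mod_cast hk.2
        apply mul_le_mul
        · apply one_div_le_one_div_of_le (by positivity)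
          exact pow_le_pow_left₀ hk0.le hkle 2
        · exact Real.exp_le_exp.mpr (mul_le_mul_of_nonneg_left (hSmono hk.1) ha0.le)
        · positivity
        · positivity
      rw [Finset.sum_const, Nat.card_Icc, nsmul_eq_mul] at h1
      have hcard : ((2*n + 1 - n : ℕ) : ℝ) = (n:ℝ) + 1 := by
        have : 2*n + 1 - n = n + 1 := by omega
        rw [this]; push_cast; ring
      rw [hcard] at h1
      have h2n : ((2*n : ℕ) : ℝ) = 2 * (n:ℝ) := by push_cast; ring
      rw [h2n] at h1
      have hE : 0 < Real.exp (a * S n) := Real.exp_pos _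
      have hmain : ((n:ℝ) + 1) * (1 / (2*(n:ℝ))^2 * Real.exp (a * S n)) ≤ T := le_trans h1 h2
      have h4 : (1 / (2*(n:ℝ))^2) = 1 / (4 * (n:ℝ)^2) := by ring
      rw [h4] at hmain
      -- (n+1)/(4n²) * E ≤ T  ⇒  E ≤ 4 T n
      have hne : (4 * (n:ℝ)^2) ≠ 0 := by positivity
      have hmain' : ((n:ℝ) + 1) * Real.exp (a * S n) ≤ T * (4 * (n:ℝ)^2) := by
        have step := mul_le_mul_of_nonneg_right hmain
          (by positivity : (0:ℝ) ≤ 4 * (n:ℝ)^2)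
        have hsimp : ((n:ℝ)+1) * (1 / (4*(n:ℝ)^2) * Real.exp (a*S n)) * (4*(n:ℝ)^2)
            = ((n:ℝ)+1) * Real.exp (a*S n) := by
          field_simp
        rwa [hsimp] at step
      nlinarith [hmain', hE, hn0]
    -- choose c strictly between 1/a and 1/m
    have hainv : 1/a < 1/m := one_div_lt_one_div_of_lt hm ha
    set c : ℝ := (1/a + 1/m) / 2 with hc
    set ε : ℝ := c - 1/a with hε
    have hεpos : 0 < ε := by simp only [hε, hc]; linarith
    have hlog : Tendsto (fun n : ℕ => Real.log n) atTop atTop :=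
      Real.tendsto_log_atTop.comp tendsto_natCast_atTop_atTop
    have hlim : Filter.limsup (fun n : ℕ => ((S n / Real.log n : ℝ) : EReal)) atTop
        ≤ ((c : ℝ) : EReal) := by
      apply limsup_le_of_le
      · isBoundedDefault
      filter_upwards [hlog.eventually_ge_atTop (max 1 (|Real.log (4*T)| / (a*ε))),
        eventually_ge_atTop 1] with n hlogn hn1
      have hlog1 : 1 ≤ Real.log n := le_trans (le_max_left _ _) hlogn
      have hlog2 : |Real.log (4*T)| / (a*ε) ≤ Real.log n := le_trans (le_max_right _ _) hlogn
      have hlogpos : 0 < Real.log n := lt_of_lt_of_le one_pos hlog1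
      have haε : 0 < a*ε := by positivity
      have hA : |Real.log (4*T)| ≤ a*ε*Real.log n := by
        have := (div_le_iff₀ haε).mp hlog2
        nlinarith [this]
      have hA' : Real.log (4*T) ≤ a*ε*Real.log n := le_trans (le_abs_self _) hA
      have hKey := key n hn1
      have hlogkey : a * S n ≤ Real.log (4*T) + Real.log n := by
        have h4T : (0:ℝ) < 4*T := by linarith
        have := (Real.le_log_iff_exp_le (by positivity : (0:ℝ) < 4*T*n)).mpr hKey
        calc a * S n ≤ Real.log (4*T*n) := this
          _ = Real.log (4*T) + Real.log n := Real.log_mul (ne_of_gt h4T) (by positivity)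
      rw [show ((c:ℝ):EReal) = ((c:ℝ):EReal) from rfl]
      rw [EReal.coe_le_coe_iff]
      rw [div_le_iff₀ hlogpos]
      have hac : a * c = a * ε + 1 := by
        field_simp [hε]
        rw [hε, mul_sub, mul_one_div_cancel ha0.ne']; ring
      nlinarith [hlogkey, hA', hac, ha0]
    have : ((1/m : ℝ) : EReal) ≤ ((c:ℝ):EReal) := le_trans h hlim
    rw [EReal.coe_le_coe_iff] at this
    have : c < 1/m := by simp only [hc]; linarith
    linarith [this, EReal.coe_le_coe_iff.mp (le_trans h hlim)]
  · intro h
    by_contra hcon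
    have hlt2 : Filter.limsup (fun n : ℕ => ((S n / Real.log n : ℝ) : EReal)) atTop
        < ((1/m : ℝ) : EReal) := not_le.mp hcon
    have h0 : ((0:ℝ) : EReal) ≤
        Filter.limsup (fun n : ℕ => ((S n / Real.log n : ℝ) : EReal)) atTop := by
      apply le_limsup_of_frequently_le
      · apply Frequently.of_forall
        intro n
        rw [EReal.coe_le_coe_iff]
        apply div_nonneg (hS0 n)
        rcases Nat.eq_zero_or_pos n with h | h
        · simp [h]
        · exact Real.log_nonneg (by exact_mod_cast h)
      · isBoundedDefault
    obtain ⟨c, hc1, hc2⟩ := EReal.exists_between_coe_real hlt2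
    have hcpos : 0 < c := by
      have := lt_of_le_of_lt h0 hc1
      exact_mod_cast this
    have hcm : c < 1/m := by exact_mod_cast hc2
    have hm1c : m < 1/c := by
      rw [lt_div_iff₀ hcpos]
      have := (lt_div_iff₀ hm).mp hcm
      nlinarith [this]
    set a : ℝ := (m + 1/c)/2 with hadef
    have haa : m < a := by simp only [hadef]; linarith
    have ha0 : 0 < a := hm.trans haa
    have hac1 : a * c < 1 := by
      have : a < 1/c := by simp only [hadef]; linarith
      exact (lt_div_iff₀ hcpos).mp this
    apply h a haa
    have hev : ∀ᶠ n in atTop,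
        ((S n / Real.log n : ℝ) : EReal) < ((c:ℝ):EReal) :=
      eventually_lt_of_limsup_lt hc1
    have hg : Summable (fun n : ℕ => (n:ℝ) ^ (a*c - 2)) :=
      Real.summable_nat_rpow.mpr (by linarith)
    apply summable_of_isBigO_nat hg
    apply Asymptotics.IsBigO.of_bound 1
    filter_upwards [hev, eventually_ge_atTop 2] with n hfn hn2
    have hn1 : (1:ℝ) < n := by exact_mod_cast hn2
    have hnpos : (0:ℝ) < n := lt_trans one_pos hn1
    have hlogpos : 0 < Real.log n := Real.log_pos hn1
    rw [EReal.coe_lt_coe_iff] at hfn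
    have hSn : S n < c * Real.log n := (div_lt_iff₀ hlogpos).mp hfn
    have hexp : Real.exp (a * S n) ≤ (n:ℝ) ^ (a*c) := by
      rw [Real.rpow_def_of_pos hnpos]
      apply Real.exp_le_exp.mpr
      nlinarith [hSn, ha0]
    have hrw : (n:ℝ) ^ (a*c - 2) = (n:ℝ) ^ (a*c) / (n:ℝ)^2 := by
      rw [Real.rpow_sub hnpos]
      norm_num [Real.rpow_two]
    have hmain : (1 / (n:ℝ)^2) * Real.exp (a * S n) ≤ (n:ℝ) ^ (a*c - 2) := by
      calc (1 / (n:ℝ)^2) * Real.exp (a * S n)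
          ≤ (1 / (n:ℝ)^2) * (n:ℝ)^(a*c) :=
            mul_le_mul_of_nonneg_left hexp (by positivity)
        _ = (n:ℝ)^(a*c) / (n:ℝ)^2 := by ring
        _ = (n:ℝ)^(a*c - 2) := hrw.symm
    have hnn : 0 ≤ (1 / (n:ℝ)^2) * Real.exp (a * S n) := by positivity
    have hgn : 0 ≤ (n:ℝ) ^ (a*c - 2) := Real.rpow_nonneg hnpos.le _
    rw [Real.norm_of_nonneg hnn, Real.norm_of_nonneg hgn, one_mul]
    exact hmain

theorem stmt0 (ℓ : ℕ → ℝ) (m : ℝ) (hm : 0 < m)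
    (hdec : Antitone ℓ) (hpos : ∀ n, 0 < ℓ n) (hlt : ∀ n, ℓ n < 1) :
    (((1 / m : ℝ) : EReal) ≤
      Filter.limsup (fun n : ℕ => (((∑ k ∈ Finset.Icc 1 n, ℓ k) / Real.log n : ℝ) : EReal)) atTop)
    ↔ ∀ a : ℝ, m < a →
        ¬ Summable (fun n : ℕ =>
          (1 / (n : ℝ) ^ 2) * Real.exp (a * ∑ k ∈ Finset.Icc 1 n, ℓ k)) := by
  exact aux_main (fun n => ∑ k ∈ Finset.Icc 1 n, ℓ k)
    (fun p q hpq => Finset.sum_le_sum_of_subset_of_nonneg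
      (Finset.Icc_subset_Icc_right hpq) (fun k _ _ => (hpos k).le))
    (fun n => Finset.sum_nonneg fun k _ => (hpos k).le) m hm
end

section
/- Let $b\in(0,1)$, let $\{\nu_k\}_{k\geq 0}$ be positive integers, and set $\lambda_K = \nu_K / (\nu_0+\cdots+\nu_{K-1})$. Then for every $K\geq 1$ and every $u \in \{1,\dots,\nu_K\}$, writing $N = \nu_0+\cdots+\nu_{K-1}+u$, one has $\frac{(\nu_0+\cdots+\nu_{K-1}+u) b^K}{\nu_0 + \nu_1 b + \cdots + \nu_{K-1}b^{K-1} + u b^K} \leq \frac{(1+\lambda_K) b}{1+\lambda_K b} < 1$. -/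
open Finset

theorem stmt4 (b : ℝ) (hb : b ∈ Set.Ioo (0 : ℝ) 1) (ν : ℕ → ℕ) (hν : ∀ k, 0 < ν k)
    (K u : ℕ) (hK : 1 ≤ K) (hu : u ∈ Finset.Icc 1 (ν K))
    (lam : ℝ) (hlam : lam = (ν K : ℝ) / ∑ k ∈ Finset.range K, (ν k : ℝ)) :
    ((∑ k ∈ Finset.range K, (ν k : ℝ)) + u) * b ^ K /
        ((∑ k ∈ Finset.range K, (ν k : ℝ) * b ^ k) + u * b ^ K)
      ≤ (1 + lam) * b / (1 + lam * b)
    ∧ (1 + lam) * b / (1 + lam * b) < 1 := by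
  obtain ⟨hb0, hb1⟩ := hb
  simp only [Finset.mem_Icc] at hu
  obtain ⟨hu1, hu2⟩ := hu
  set S : ℝ := ∑ k ∈ Finset.range K, (ν k : ℝ) with hS
  set T : ℝ := ∑ k ∈ Finset.range K, (ν k : ℝ) * b ^ k with hT
  have hSpos : 0 < S :=
    Finset.sum_pos (fun k _ => by exact_mod_cast hν k) ⟨0, Finset.mem_range.2 hK⟩
  have hTpos : 0 < T :=
    Finset.sum_pos (fun k _ => by
      have : (0:ℝ) < ν k := by exact_mod_cast hν k
      positivity) ⟨0, Finset.mem_range.2 hK⟩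
  have hνK : (0:ℝ) < ν K := by exact_mod_cast hν K
  have hlam0 : 0 ≤ lam := by rw [hlam]; positivity
  have hu2' : (u:ℝ) ≤ ν K := by exact_mod_cast hu2
  have hu1' : (1:ℝ) ≤ u := by exact_mod_cast hu1
  have hbK : 0 < b ^ K := pow_pos hb0 K
  have hTb : S * b ^ K ≤ T * b := by
    rw [hS, hT, Finset.sum_mul, Finset.sum_mul]
    apply Finset.sum_le_sum
    intro k hk
    have hkK : k + 1 ≤ K := Finset.mem_range.1 hk
    have hpow : b ^ K ≤ b ^ (k + 1) := pow_le_pow_of_le_one hb0.le hb1.le hkK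
    have hν' : (0:ℝ) ≤ ν k := by positivity
    calc (ν k : ℝ) * b ^ K ≤ (ν k : ℝ) * b ^ (k + 1) := by nlinarith
      _ = (ν k : ℝ) * b ^ k * b := by ring
  have hden1 : 0 < T + u * b ^ K := by positivity
  have hden2 : 0 < 1 + lam * b := by positivity
  have hlamS : lam * S = ν K := by rw [hlam]; field_simp
  have key : (S + u) * b ^ K * (S + (ν K : ℝ) * b) ≤ (S + (ν K : ℝ)) * b * (T + u * b ^ K) := by
    have h1 : 0 ≤ (S + (ν K : ℝ)) * (T * b - S * b ^ K) :=
      mul_nonneg (by positivity) (sub_nonneg.2 hTb)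
    have hpow : b ^ K * b ≤ b ^ K := by nlinarith
    have h2 : 0 ≤ S * (((ν K : ℝ) - u) * (b ^ K - b ^ K * b)) :=
      mul_nonneg hSpos.le (mul_nonneg (sub_nonneg.2 hu2') (sub_nonneg.2 hpow))
    nlinarith [h1, h2]
  constructor
  · rw [div_le_div_iff₀ hden1 hden2]
    have hmul : ((S + u) * b ^ K * (1 + lam * b)) * S ≤ ((1 + lam) * b * (T + u * b ^ K)) * S := by
      have e1 : ((S + u) * b ^ K * (1 + lam * b)) * S = (S + u) * b ^ K * (S + (lam * S) * b) := by
        ring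
      have e2 : ((1 + lam) * b * (T + u * b ^ K)) * S = (S + lam * S) * b * (T + u * b ^ K) := by
        ring
      rw [e1, e2, hlamS]
      exact key
    exact le_of_mul_le_mul_right hmul hSpos
  · rw [div_lt_one hden2]
    nlinarith [hlam0, hb0, hb1]
end

section
/- Let $b\in(0,1)$ and let $\{\nu_k\}_{k\geq 0}$ be positive integers with $\lambda_K := \nu_K/(\nu_0+\cdots+\nu_{K-1})$. Suppose along a subsequence $K_q$ one has $(\nu_0+\cdots+\nu_{K_q}) b^{K_q} / \sum_{k=0}^{K_q}\nu_k b^k \to 1$ as $q\to\infty$. Then $\lambda_{K_q} \to \infty$. -/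
open Filter Finset

theorem stmt5 (b : ℝ) (hb : b ∈ Set.Ioo (0 : ℝ) 1) (ν : ℕ → ℕ) (hν : ∀ k, 0 < ν k)
    (K : ℕ → ℕ) (hK : StrictMono K)
    (hlim : Filter.Tendsto
      (fun q : ℕ => (∑ k ∈ Finset.range (K q + 1), (ν k : ℝ)) * b ^ (K q) /
        ∑ k ∈ Finset.range (K q + 1), (ν k : ℝ) * b ^ k) atTop (nhds 1)) :
    Filter.Tendsto
      (fun q : ℕ => (ν (K q) : ℝ) / ∑ k ∈ Finset.range (K q), (ν k : ℝ))
      atTop atTop := by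
  obtain ⟨hb0, hb1⟩ := hb
  rw [tendsto_atTop]
  intro C
  set c : ℝ := max C 1 with hcdef
  have hc : (0 : ℝ) < c := lt_of_lt_of_le one_pos (le_max_right _ _)
  have hden : (0 : ℝ) < 1 + c * b := by nlinarith
  have hfc : b * (1 + c) / (1 + c * b) < 1 := by
    rw [div_lt_one hden]; nlinarith
  have h1 : ∀ᶠ q in atTop, b * (1 + c) / (1 + c * b) <
      (∑ k ∈ Finset.range (K q + 1), (ν k : ℝ)) * b ^ (K q) /
        ∑ k ∈ Finset.range (K q + 1), (ν k : ℝ) * b ^ k :=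
    hlim.eventually (eventually_gt_nhds hfc)
  filter_upwards [h1, eventually_ge_atTop 1] with q hq hq1
  set n := K q with hn
  have hn1 : 1 ≤ n := le_trans hq1 hK.le_apply
  set S' : ℝ := ∑ k ∈ Finset.range n, (ν k : ℝ) with hS'def
  set ν' : ℝ := (ν n : ℝ) with hν'def
  have hS' : 0 < S' := by
    apply Finset.sum_pos
    · intro i _; exact_mod_cast hν i
    · exact Finset.nonempty_range_iff.mpr (by omega)
  have hν'0 : 0 < ν' := by rw [hν'def]; exact_mod_cast hν n
  have hp : (0 : ℝ) < b ^ (n - 1) := pow_pos hb0 _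
  have hpow : b ^ n = b ^ (n - 1) * b := by
    rw [← pow_succ]; congr 1; omega
  -- lower bound on T
  have hTlb : (S' + ν' * b) * b ^ (n - 1) ≤
      ∑ k ∈ Finset.range (n + 1), (ν k : ℝ) * b ^ k := by
    rw [Finset.sum_range_succ]
    have h2 : S' * b ^ (n - 1) ≤ ∑ k ∈ Finset.range n, (ν k : ℝ) * b ^ k := by
      rw [hS'def, Finset.sum_mul]
      apply Finset.sum_le_sum
      intro i hi
      have : b ^ (n - 1) ≤ b ^ i := by
        apply pow_le_pow_of_le_one hb0.le hb1.le
        have := Finset.mem_range.mp hi; omega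
      have hνi : (0:ℝ) ≤ (ν i : ℝ) := by positivity
      nlinarith
    have : ν' * b * b ^ (n - 1) = ν' * b ^ n := by rw [hpow]; ring
    nlinarith
  have hT : 0 < ∑ k ∈ Finset.range (n + 1), (ν k : ℝ) * b ^ k :=
    lt_of_lt_of_le (by positivity) hTlb
  have hSsum : (∑ k ∈ Finset.range (n + 1), (ν k : ℝ)) = S' + ν' :=
    Finset.sum_range_succ _ _
  -- upper bound on ratio
  have hRub : (∑ k ∈ Finset.range (n + 1), (ν k : ℝ)) * b ^ n /
      (∑ k ∈ Finset.range (n + 1), (ν k : ℝ) * b ^ k) ≤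
      (S' + ν') * b / (S' + ν' * b) := by
    rw [hSsum, hpow]
    have hd2 : (0 : ℝ) < S' + ν' * b := by positivity
    rw [div_le_div_iff₀ hT (by positivity)]
    have := hTlb
    have hnum : (0 : ℝ) ≤ (S' + ν') * b := by positivity
    calc (S' + ν') * (b ^ (n - 1) * b) * (S' + ν' * b)
        = ((S' + ν') * b) * ((S' + ν' * b) * b ^ (n - 1)) := by ring
      _ ≤ ((S' + ν') * b) * (∑ k ∈ Finset.range (n + 1), (ν k : ℝ) * b ^ k) := by
          exact mul_le_mul_of_nonneg_left hTlb hnum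
      _ = (S' + ν') * b * ∑ k ∈ Finset.range (n + 1), (ν k : ℝ) * b ^ k := by ring
  have hkey : b * (1 + c) / (1 + c * b) < (S' + ν') * b / (S' + ν' * b) :=
    lt_of_lt_of_le hq hRub
  -- extract c * S' < ν'
  have hd2 : (0 : ℝ) < S' + ν' * b := by positivity
  rw [div_lt_div_iff₀ hden hd2] at hkey
  have hfinal : c * S' < ν' := by nlinarith [mul_pos hb0 (sub_pos.mpr hb1)]
  have : c ≤ ν' / S' := by
    rw [le_div_iff₀ hS']; nlinarith
  exact le_trans (le_max_left C 1) this
end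

section
/- Let $b\in(0,1)$ and $\{\nu_k\}_{k\geq 0}$ positive reals with $\sum_{k=0}^\infty \nu_k b^{2k} < \infty$, and suppose there is $C>0$ such that $\sum_{k=0}^K \nu_k b^k \leq C \ln(\nu_0+\cdots+\nu_K)$ for all large $K$. If $\nu_K \geq \nu_0+\cdots+\nu_{K-1}$ for some large $K$, then $\nu_K b^K \leq C_0 K$ where $C_0 = 2C\ln(2/b)$. -/
open Finset

theorem stmt6 (b : ℝ) (hb : b ∈ Set.Ioo (0 : ℝ) 1) (ν : ℕ → ℝ) (hν : ∀ k, 0 < ν k)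
    (hsum : Summable (fun k : ℕ => ν k * b ^ (2 * k)))
    (C : ℝ) (hC : 0 < C)
    (hlog : ∃ N : ℕ, ∀ K ≥ N,
      ∑ k ∈ Finset.range (K + 1), ν k * b ^ k ≤
        C * Real.log (∑ k ∈ Finset.range (K + 1), ν k)) :
    ∃ N : ℕ, ∀ K ≥ N, (∑ k ∈ Finset.range K, ν k) ≤ ν K →
      ν K * b ^ K ≤ (2 * C * Real.log (2 / b)) * K := by
  obtain ⟨N1, hN1⟩ := hlog
  obtain ⟨hb0, hb1⟩ := hb
  have htend := hsum.tendsto_atTop_zero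
  have hev : ∀ᶠ k in Filter.atTop, ν k * b ^ (2 * k) ≤ 1 :=
    htend.eventually_le_const (by norm_num : (0:ℝ) < 1)
  obtain ⟨N2, hN2⟩ := Filter.eventually_atTop.mp hev
  refine ⟨max (max N1 N2) 1, fun K hK hKν => ?_⟩
  have hK1 : 1 ≤ K := le_trans (le_max_right _ _) hK
  have hKN1 : N1 ≤ K := le_trans (le_max_left _ _) (le_trans (le_max_left _ _) hK)
  have hKN2 : N2 ≤ K := le_trans (le_max_right _ _) (le_trans (le_max_left _ _) hK)
  have h1 : ν K * b ^ K ≤ ∑ k ∈ Finset.range (K + 1), ν k * b ^ k := by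
    apply Finset.single_le_sum (f := fun k => ν k * b ^ k)
    · intro i _; exact mul_nonneg (hν i).le (pow_nonneg hb0.le i)
    · simp
  have h2 := hN1 K hKN1
  have hsum2 : ∑ k ∈ Finset.range (K + 1), ν k ≤ 2 * ν K := by
    rw [Finset.sum_range_succ]
    linarith
  have hpos : 0 < ∑ k ∈ Finset.range (K + 1), ν k :=
    Finset.sum_pos (fun i _ => hν i) (by simp)
  have h3 : Real.log (∑ k ∈ Finset.range (K + 1), ν k) ≤ Real.log (2 * ν K) :=
    Real.log_le_log hpos hsum2
  have hνb : ν K ≤ (b ^ (2 * K))⁻¹ := by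
    have hp : 0 < b ^ (2 * K) := by positivity
    rw [inv_eq_one_div, le_div_iff₀ hp]
    linarith [hN2 K hKN2]
  have h4 : Real.log (2 * ν K) ≤ Real.log 2 + 2 * K * (-Real.log b) := by
    rw [Real.log_mul (by norm_num) (ne_of_gt (hν K))]
    have : Real.log (ν K) ≤ 2 * K * (-Real.log b) := by
      calc Real.log (ν K) ≤ Real.log ((b ^ (2 * K))⁻¹) :=
            Real.log_le_log (hν K) hνb
        _ = -(2 * K * Real.log b) := by
            rw [Real.log_inv, Real.log_pow]; push_cast; ring
        _ = 2 * K * (-Real.log b) := by ring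
    linarith
  have hlog2b : Real.log (2 / b) = Real.log 2 - Real.log b :=
    Real.log_div (by norm_num) (ne_of_gt hb0)
  have hln2 : 0 < Real.log 2 := Real.log_pos (by norm_num)
  have hlnb : Real.log b < 0 := Real.log_neg hb0 hb1
  have hK1' : (1:ℝ) ≤ K := by exact_mod_cast hK1
  calc ν K * b ^ K ≤ C * Real.log (∑ k ∈ Finset.range (K + 1), ν k) :=
        le_trans h1 h2
    _ ≤ C * (Real.log 2 + 2 * K * (-Real.log b)) := by
        apply mul_le_mul_of_nonneg_left (le_trans h3 h4) hC.le
    _ ≤ (2 * C * Real.log (2 / b)) * K := by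
        rw [hlog2b]
        have key : C * Real.log 2 ≤ 2 * C * Real.log 2 * K := by
          nlinarith [mul_pos hC hln2, hK1']
        nlinarith [key, mul_nonneg (mul_nonneg hC.le (neg_nonneg.2 hlnb.le)) (by linarith : (0:ℝ) ≤ K)]
end

section
/- Let $\ell_n = \frac{1}{n} - \frac{\beta}{n\ln n}$ for $n\geq 2$, with $\beta > 1$. Then $\limsup_{n\to\infty} (\ell_2+\cdots+\ell_n)/\ln n = 1$, yet $\sum_{n=2}^\infty \frac{1}{n^2} e^{\ell_2+\cdots+\ell_n} < \infty$. -/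
open Filter Finset

private lemma logA {x : ℝ} (hx : 1 ≤ x) : Real.log (x + 1) - Real.log x ≤ 1 / x := by
  have hx0 : (0 : ℝ) < x := by linarith
  have h1 : Real.log (x + 1) - Real.log x = Real.log ((x + 1) / x) := by
    rw [Real.log_div (by linarith) (by linarith)]
  rw [h1]
  have h2 := Real.log_le_sub_one_of_pos (x := (x + 1) / x) (by positivity)
  have h3 : (x + 1) / x - 1 = 1 / x := by field_simp; ring
  linarith

private lemma logB {x : ℝ} (hx : 0 < x) : 1 / (x + 1) ≤ Real.log (x + 1) - Real.log x := by
  have h1 : Real.log (x + 1) - Real.log x = Real.log ((x + 1) / x) := by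
    rw [Real.log_div (by linarith) (by linarith)]
  rw [h1]
  have h2 := Real.one_sub_inv_le_log_of_pos (x := (x + 1) / x) (by positivity)
  have h3 : 1 - ((x + 1) / x)⁻¹ = 1 / (x + 1) := by
    rw [inv_div]; field_simp; ring
  linarith

private lemma logC {x : ℝ} (hx : 2 ≤ x) :
    Real.log (Real.log (x + 1)) - Real.log (Real.log x) ≤ 1 / (x * Real.log x) := by
  have hx0 : (0 : ℝ) < x := by linarith
  have hu : 0 < Real.log x := Real.log_pos (by linarith)
  have hv : 0 < Real.log (x + 1) := Real.log_pos (by linarith)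
  have hd : Real.log (x + 1) - Real.log x ≤ 1 / x := logA (by linarith)
  have h1 : Real.log (Real.log (x + 1)) - Real.log (Real.log x)
      = Real.log (Real.log (x + 1) / Real.log x) := by rw [Real.log_div hv.ne' hu.ne']
  rw [h1]
  have h2 := Real.log_le_sub_one_of_pos (x := Real.log (x + 1) / Real.log x) (by positivity)
  have h3 : Real.log (x + 1) / Real.log x - 1
      = (Real.log (x + 1) - Real.log x) / Real.log x := by field_simp
  have h4 : (Real.log (x + 1) - Real.log x) / Real.log x ≤ (1 / x) / Real.log x :=
    (div_le_div_iff_of_pos_right hu).mpr hd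
  have h5 : (1 / x) / Real.log x = 1 / (x * Real.log x) := by
    rw [div_div, one_div]
  linarith

private lemma logD {x : ℝ} (hx : 2 ≤ x) :
    1 / ((x + 1) * Real.log (x + 1))
      ≤ Real.log (Real.log (x + 1)) - Real.log (Real.log x) := by
  have hx0 : (0 : ℝ) < x := by linarith
  have hu : 0 < Real.log x := Real.log_pos (by linarith)
  have hv : 0 < Real.log (x + 1) := Real.log_pos (by linarith)
  have hd : 1 / (x + 1) ≤ Real.log (x + 1) - Real.log x := logB hx0
  have h1 : Real.log (Real.log (x + 1)) - Real.log (Real.log x)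
      = Real.log (Real.log (x + 1) / Real.log x) := by rw [Real.log_div hv.ne' hu.ne']
  rw [h1]
  have h2 := Real.one_sub_inv_le_log_of_pos (x := Real.log (x + 1) / Real.log x) (by positivity)
  have h3 : 1 - (Real.log (x + 1) / Real.log x)⁻¹
      = (Real.log (x + 1) - Real.log x) / Real.log (x + 1) := by
    rw [inv_div]; field_simp
  have h4 : (1 / (x + 1)) / Real.log (x + 1)
      ≤ (Real.log (x + 1) - Real.log x) / Real.log (x + 1) :=
    (div_le_div_iff_of_pos_right hv).mpr hd
  have h5 : (1 / (x + 1)) / Real.log (x + 1) = 1 / ((x + 1) * Real.log (x + 1)) := by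
    rw [div_div, one_div]
  linarith

private lemma logE {c x : ℝ} (hc : 0 < c) (hx : 2 ≤ x) :
    c / (2 * x) * Real.exp (-(c + 1) * Real.log (Real.log (x + 1)))
      ≤ Real.exp (-c * Real.log (Real.log x))
        - Real.exp (-c * Real.log (Real.log (x + 1))) := by
  have hx0 : (0 : ℝ) < x := by linarith
  have hv : 0 < Real.log (x + 1) := Real.log_pos (by linarith)
  set u : ℝ := Real.log (Real.log x) with hu_def
  set v : ℝ := Real.log (Real.log (x + 1)) with hv_def
  have hD : 1 / ((x + 1) * Real.log (x + 1)) ≤ v - u := logD hx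
  have key : Real.exp (-c * u) - Real.exp (-c * v)
      = Real.exp (-c * v) * (Real.exp (c * (v - u)) - 1) := by
    rw [mul_sub, ← Real.exp_add, mul_one]
    have : -c * v + c * (v - u) = -c * u := by ring
    rw [this]
  rw [key]
  have h1 : c * (v - u) ≤ Real.exp (c * (v - u)) - 1 := by
    have := Real.add_one_le_exp (c * (v - u)); linarith
  have h2 : c * (1 / ((x + 1) * Real.log (x + 1))) ≤ c * (v - u) :=
    mul_le_mul_of_nonneg_left hD hc.le
  have h3 : Real.exp (-c * v) * (c * (1 / ((x + 1) * Real.log (x + 1))))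
      ≤ Real.exp (-c * v) * (Real.exp (c * (v - u)) - 1) := by
    apply mul_le_mul_of_nonneg_left _ (Real.exp_nonneg _)
    linarith
  refine le_trans ?_ h3
  have hexp : Real.exp (-(c + 1) * v) = Real.exp (-c * v) * (Real.log (x + 1))⁻¹ := by
    have : -(c + 1) * v = -c * v + (-v) := by ring
    rw [this, Real.exp_add]
    congr 1
    rw [Real.exp_neg, hv_def, Real.exp_log hv]
  rw [hexp]
  have hs : c / (2 * x) * (Real.log (x + 1))⁻¹ ≤ c * (1 / ((x + 1) * Real.log (x + 1))) := by
    have e1 : c / (2 * x) * (Real.log (x + 1))⁻¹ = c / (2 * x * Real.log (x + 1)) := by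
      rw [← div_eq_mul_inv, div_div]
    have e2 : c * (1 / ((x + 1) * Real.log (x + 1))) = c / ((x + 1) * Real.log (x + 1)) := by
      rw [mul_one_div]
    rw [e1, e2]
    apply div_le_div_of_nonneg_left hc.le (by positivity) (by nlinarith)
  calc c / (2 * x) * (Real.exp (-c * v) * (Real.log (x + 1))⁻¹)
      = (c / (2 * x) * (Real.log (x + 1))⁻¹) * Real.exp (-c * v) := by ring
    _ ≤ (c * (1 / ((x + 1) * Real.log (x + 1)))) * Real.exp (-c * v) :=
        mul_le_mul_of_nonneg_right hs (Real.exp_nonneg _)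
    _ = Real.exp (-c * v) * (c * (1 / ((x + 1) * Real.log (x + 1)))) := by ring

theorem stmt9 (β : ℝ) (hβ : 1 < β)
    (ℓ : ℕ → ℝ) (hℓ : ∀ n ≥ 2, ℓ n = 1 / (n : ℝ) - β / ((n : ℝ) * Real.log n)) :
    Filter.limsup
        (fun n : ℕ => (∑ k ∈ Finset.Icc 2 n, ℓ k) / Real.log n) atTop = 1
    ∧ Summable (fun n : ℕ =>
        (1 / (n : ℝ) ^ 2) * Real.exp (∑ k ∈ Finset.Icc 2 n, ℓ k)) := by
  have hβ0 : 0 < β := by linarith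
  set S : ℕ → ℝ := fun n => ∑ k ∈ Finset.Icc 2 n, ℓ k with hS
  have hS2 : S 2 = ℓ 2 := by simp [hS]
  set Cu : ℝ := ℓ 2 - Real.log 2 + β * Real.log (Real.log 3) with hCu
  set Cl : ℝ := ℓ 2 - Real.log 3 + β * Real.log (Real.log 2) with hCl
  -- upper bound
  have hup : ∀ n : ℕ, 2 ≤ n →
      S n ≤ Real.log n - β * Real.log (Real.log ((n : ℝ) + 1)) + Cu := by
    intro n hn
    induction n, hn using Nat.le_induction with
    | base =>
      rw [hS2]
      push_cast
      norm_num [hCu]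
    | succ n hn ih =>
      have hn2 : (2 : ℝ) ≤ (n : ℝ) := by exact_mod_cast hn
      have hstep : S (n + 1) = S n + ℓ (n + 1) := by
        rw [hS]
        exact Finset.sum_Icc_succ_top (by omega) ℓ
      have hl : ℓ (n + 1) = 1 / ((n : ℝ) + 1) - β / (((n : ℝ) + 1) * Real.log ((n : ℝ) + 1)) := by
        have := hℓ (n + 1) (by omega)
        push_cast at this ⊢
        exact this
      have hB := logB (x := (n : ℝ)) (by linarith)
      have hC := logC (x := (n : ℝ) + 1) (by linarith)
      have hCβ := mul_le_mul_of_nonneg_left hC hβ0.le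
      have hconv : β / (((n : ℝ) + 1) * Real.log ((n : ℝ) + 1))
          = β * (1 / (((n : ℝ) + 1) * Real.log ((n : ℝ) + 1))) := by rw [mul_one_div]
      push_cast
      push_cast at ih
      rw [hstep, hl]
      have h12 : ((n : ℝ) + 1 + 1) = (n : ℝ) + 2 := by ring
      rw [h12] at hCβ ⊢
      linarith [hCβ, hB, ih, hconv]
  -- lower bound
  have hlow : ∀ n : ℕ, 2 ≤ n →
      Real.log ((n : ℝ) + 1) - β * Real.log (Real.log n) + Cl ≤ S n := by
    intro n hn
    induction n, hn using Nat.le_induction with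
    | base =>
      rw [hS2]
      push_cast
      norm_num [hCl]
    | succ n hn ih =>
      have hn2 : (2 : ℝ) ≤ (n : ℝ) := by exact_mod_cast hn
      have hstep : S (n + 1) = S n + ℓ (n + 1) := by
        rw [hS]
        exact Finset.sum_Icc_succ_top (by omega) ℓ
      have hl : ℓ (n + 1) = 1 / ((n : ℝ) + 1) - β / (((n : ℝ) + 1) * Real.log ((n : ℝ) + 1)) := by
        have := hℓ (n + 1) (by omega)
        push_cast at this ⊢
        exact this
      have hA := logA (x := (n : ℝ) + 1) (by linarith)
      have hD := logD (x := (n : ℝ)) (by linarith)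
      have hDβ := mul_le_mul_of_nonneg_left hD hβ0.le
      have hconv : β / (((n : ℝ) + 1) * Real.log ((n : ℝ) + 1))
          = β * (1 / (((n : ℝ) + 1) * Real.log ((n : ℝ) + 1))) := by rw [mul_one_div]
      push_cast
      push_cast at ih
      rw [hstep, hl]
      have h12 : ((n : ℝ) + 1 + 1) = (n : ℝ) + 2 := by ring
      rw [h12] at hA ⊢
      linarith [hDβ, hA, ih, hconv]
  -- simplified two-sided bounds
  have hup' : ∀ n : ℕ, 2 ≤ n →
      S n ≤ Real.log n - β * Real.log (Real.log n) + Cu := by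
    intro n hn
    have hn2 : (2 : ℝ) ≤ (n : ℝ) := by exact_mod_cast hn
    have h1 : Real.log (Real.log n) ≤ Real.log (Real.log ((n : ℝ) + 1)) := by
      apply Real.log_le_log (Real.log_pos (by linarith))
      apply Real.log_le_log (by linarith) (by linarith)
    have := hup n hn
    nlinarith
  have hlow' : ∀ n : ℕ, 2 ≤ n →
      Real.log n - β * Real.log (Real.log n) + Cl ≤ S n := by
    intro n hn
    have hn2 : (2 : ℝ) ≤ (n : ℝ) := by exact_mod_cast hn
    have h1 : Real.log n ≤ Real.log ((n : ℝ) + 1) :=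
      Real.log_le_log (by linarith) (by linarith)
    have := hlow n hn
    linarith
  constructor
  · -- limsup part
    have hlogn : Tendsto (fun n : ℕ => Real.log n) atTop atTop :=
      Real.tendsto_log_atTop.comp tendsto_natCast_atTop_atTop
    have h1 : Tendsto (fun n : ℕ => (Real.log n)⁻¹) atTop (nhds 0) :=
      tendsto_inv_atTop_zero.comp hlogn
    have h2 : Tendsto (fun t : ℝ => Real.log t / t) atTop (nhds 0) :=
      Real.isLittleO_log_id_atTop.tendsto_div_nhds_zero
    have h3 : Tendsto (fun n : ℕ => Real.log (Real.log n) / Real.log n) atTop (nhds 0) :=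
      h2.comp hlogn
    have hg : Tendsto (fun n : ℕ =>
        1 - β * (Real.log (Real.log n) / Real.log n) + Cl * (Real.log n)⁻¹) atTop (nhds 1) := by
      have := ((tendsto_const_nhds (x := (1:ℝ)) (f := atTop)).sub
        (h3.const_mul β)).add (h1.const_mul Cl)
      simpa using this
    have hh : Tendsto (fun n : ℕ =>
        1 - β * (Real.log (Real.log n) / Real.log n) + Cu * (Real.log n)⁻¹) atTop (nhds 1) := by
      have := ((tendsto_const_nhds (x := (1:ℝ)) (f := atTop)).sub
        (h3.const_mul β)).add (h1.const_mul Cu)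
      simpa using this
    have hten : Tendsto (fun n : ℕ => S n / Real.log n) atTop (nhds 1) := by
      apply tendsto_of_tendsto_of_tendsto_of_le_of_le' hg hh
      · filter_upwards [eventually_ge_atTop 3] with n hn
        have hn2 : (3 : ℝ) ≤ (n : ℝ) := by exact_mod_cast hn
        have hlog : 0 < Real.log n := Real.log_pos (by linarith)
        have hb := hlow' n (by omega)
        have := (div_le_div_iff_of_pos_right hlog).mpr hb
        calc 1 - β * (Real.log (Real.log n) / Real.log n) + Cl * (Real.log n)⁻¹
            = (Real.log n - β * Real.log (Real.log n) + Cl) / Real.log n := by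
              field_simp
          _ ≤ S n / Real.log n := this
      · filter_upwards [eventually_ge_atTop 3] with n hn
        have hn2 : (3 : ℝ) ≤ (n : ℝ) := by exact_mod_cast hn
        have hlog : 0 < Real.log n := Real.log_pos (by linarith)
        have hb := hup' n (by omega)
        have := (div_le_div_iff_of_pos_right hlog).mpr hb
        calc S n / Real.log n
            ≤ (Real.log n - β * Real.log (Real.log n) + Cu) / Real.log n := this
          _ = 1 - β * (Real.log (Real.log n) / Real.log n) + Cu * (Real.log n)⁻¹ := by
              field_simp
      
    exact hten.limsup_eq
  · -- summability
    set c : ℝ := β - 1 with hc_def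
    have hc : 0 < c := by simp [hc_def]; linarith
    set h : ℕ → ℝ := fun n => Real.exp (-c * Real.log (Real.log n)) with hh_def
    set K : ℝ := Real.exp Cu * (2 / c) with hK
    -- key pointwise bound
    have hkey : ∀ n : ℕ, 2 ≤ n →
        (1 / (n : ℝ) ^ 2) * Real.exp (S n) ≤ K * (h n - h (n + 1)) := by
      intro n hn
      have hn2 : (2 : ℝ) ≤ (n : ℝ) := by exact_mod_cast hn
      have hn0 : (0 : ℝ) < (n : ℝ) := by linarith
      have hE := logE hc (x := (n : ℝ)) hn2
      have hcc : c + 1 = β := by rw [hc_def]; ring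
      rw [hcc] at hE
      have hexpS : Real.exp (S n)
          ≤ (n : ℝ) * Real.exp (-β * Real.log (Real.log ((n : ℝ) + 1))) * Real.exp Cu := by
        have := Real.exp_le_exp.mpr (hup n hn)
        calc Real.exp (S n)
            ≤ Real.exp (Real.log n - β * Real.log (Real.log ((n : ℝ) + 1)) + Cu) := this
          _ = (n : ℝ) * Real.exp (-β * Real.log (Real.log ((n : ℝ) + 1))) * Real.exp Cu := by
              rw [show Real.log (n:ℝ) - β * Real.log (Real.log ((n : ℝ) + 1)) + Cu
                  = Real.log (n:ℝ) + (-β * Real.log (Real.log ((n : ℝ) + 1))) + Cu by ring,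
                Real.exp_add, Real.exp_add, Real.exp_log hn0]
      have hhcast : h (n + 1) = Real.exp (-c * Real.log (Real.log ((n : ℝ) + 1))) := by
        simp [hh_def]
      have step1 : (1 / (n : ℝ) ^ 2) * Real.exp (S n)
          ≤ Real.exp Cu * ((1 / (n : ℝ)) * Real.exp (-β * Real.log (Real.log ((n : ℝ) + 1)))) := by
        have hpos : (0 : ℝ) ≤ 1 / (n : ℝ) ^ 2 := by positivity
        have := mul_le_mul_of_nonneg_left hexpS hpos
        calc (1 / (n : ℝ) ^ 2) * Real.exp (S n)
            ≤ (1 / (n : ℝ) ^ 2) *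
              ((n : ℝ) * Real.exp (-β * Real.log (Real.log ((n : ℝ) + 1))) * Real.exp Cu) := this
          _ = Real.exp Cu * ((1 / (n : ℝ)) *
              Real.exp (-β * Real.log (Real.log ((n : ℝ) + 1)))) := by
              field_simp
      have step2 : (1 / (n : ℝ)) * Real.exp (-β * Real.log (Real.log ((n : ℝ) + 1)))
          ≤ (2 / c) * (h n - h (n + 1)) := by
        have := mul_le_mul_of_nonneg_left hE (show (0:ℝ) ≤ 2 / c by positivity)
        have heq : (2 / c) * (c / (2 * (n : ℝ))
            * Real.exp (-β * Real.log (Real.log ((n : ℝ) + 1))))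
            = (1 / (n : ℝ)) * Real.exp (-β * Real.log (Real.log ((n : ℝ) + 1))) := by
          field_simp
        rw [heq] at this
        calc (1 / (n : ℝ)) * Real.exp (-β * Real.log (Real.log ((n : ℝ) + 1)))
            ≤ (2 / c) * (Real.exp (-c * Real.log (Real.log (n : ℝ)))
              - Real.exp (-c * Real.log (Real.log ((n : ℝ) + 1)))) := this
          _ = (2 / c) * (h n - h (n + 1)) := by rw [hhcast]
      calc (1 / (n : ℝ) ^ 2) * Real.exp (S n)
          ≤ Real.exp Cu * ((1 / (n : ℝ)) *
            Real.exp (-β * Real.log (Real.log ((n : ℝ) + 1)))) := step1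
        _ ≤ Real.exp Cu * ((2 / c) * (h n - h (n + 1))) :=
            mul_le_mul_of_nonneg_left step2 (Real.exp_nonneg _)
        _ = K * (h n - h (n + 1)) := by rw [hK]; ring
    -- h is antitone from 2 on, with telescoping summable
    have hmono : ∀ n : ℕ, 2 ≤ n → h (n + 1) ≤ h n := by
      intro n hn
      have hn2 : (2 : ℝ) ≤ (n : ℝ) := by exact_mod_cast hn
      apply Real.exp_le_exp.mpr
      have h1 : Real.log (Real.log n) ≤ Real.log (Real.log ((n : ℝ) + 1)) := by
        apply Real.log_le_log (Real.log_pos (by linarith))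
        apply Real.log_le_log (by linarith) (by linarith)
      have : ((n : ℝ) + 1) = ((n + 1 : ℕ) : ℝ) := by push_cast; ring
      rw [this] at h1
      nlinarith
    have htele : Summable (fun n : ℕ => h (n + 2) - h (n + 3)) := by
      apply summable_of_sum_range_le (c := h 2)
      · intro n
        have := hmono (n + 2) (by omega)
        simpa using sub_nonneg.mpr this
      · intro n
        have := Finset.sum_range_sub' (fun i => h (i + 2)) n
        rw [show (∑ i ∈ Finset.range n, (h (i + 2) - h (i + 3)))
            = ∑ i ∈ Finset.range n, ((fun i => h (i + 2)) i - (fun i => h (i + 2)) (i + 1))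
            from rfl, this]
        have : 0 ≤ h (n + 2) := Real.exp_nonneg _
        linarith
    have hsumK : Summable (fun n : ℕ => K * (h (n + 2) - h (n + 3))) := htele.mul_left K
    have hshift : Summable (fun n : ℕ =>
        (1 / ((n + 2 : ℕ) : ℝ) ^ 2) * Real.exp (S (n + 2))) := by
      apply Summable.of_nonneg_of_le _ _ hsumK
      · intro n; positivity
      · intro n
        have := hkey (n + 2) (by omega)
        simpa using this
    exact (summable_nat_add_iff
      (f := fun n : ℕ => (1 / (n : ℝ) ^ 2) * Real.exp (S n)) 2).mp hshift
end

section
/- There exists a compact set $A \subset [0,1]$ of Lebesgue measure zero and Hausdorff dimension $1$, together with a Borel probability measure $\sigma_0$ supported on $A$ and a constant $c_0>0$, such that for every interval $B\subset[0,1]$ with $0 < |B| < 1/2$ one has $\sigma_0(B) \leq c_0 \, |\ln |B|| \cdot |B|$. -/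
open MeasureTheory Filter Topology
open scoped ENNReal NNReal

namespace Stmt11

noncomputable def LL (n : ℕ) : ℝ := (1/2)^n / (n+1)

noncomputable def ww (n : ℕ) : ℝ := LL n - LL (n+1)

lemma LL_pos (n : ℕ) : 0 < LL n := by
  apply div_pos (pow_pos (by norm_num) n); positivity

lemma LL_le (n : ℕ) : LL n ≤ (1/2)^n := by
  rw [LL, div_le_iff₀ (by positivity)]
  nlinarith [pow_pos (show (0:ℝ) < 1/2 by norm_num) n, Nat.cast_nonneg (α := ℝ) n]

lemma two_LL_succ_le (n : ℕ) : 2 * LL (n+1) ≤ LL n := by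
  have hx : (0:ℝ) < (1/2)^n := pow_pos (by norm_num) n
  have h1 : (0:ℝ) < (n:ℝ) + 1 := by positivity
  have h2 : (0:ℝ) < (n:ℝ) + 2 := by positivity
  simp only [LL, pow_succ, Nat.cast_add, Nat.cast_one]
  have key : 2 * ((1/2:ℝ)^n * (1/2) / ((n:ℝ)+1+1)) = (1/2)^n/((n:ℝ)+2) := by ring
  rw [key]
  gcongr <;> first
    | norm_num
    | exact hx.le
    | linarith

lemma ww_nonneg (n : ℕ) : 0 ≤ ww n := by
  have := two_LL_succ_le n; have := LL_pos (n+1); rw [ww]; linarith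

lemma ww_le (n : ℕ) : ww n ≤ (1/2)^n := by
  have := LL_pos (n+1); have := LL_le n; rw [ww]; linarith

lemma LL_tendsto : Tendsto (fun n : ℕ => LL n) atTop (𝓝 0) := by
  apply squeeze_zero (fun n => (LL_pos n).le) LL_le
  exact tendsto_pow_atTop_nhds_zero_of_lt_one (by norm_num) (by norm_num)

lemma hasSum_ww_add (k : ℕ) : HasSum (fun n => ww (n + k)) (LL k) := by
  have key : ∀ N : ℕ, ∑ i ∈ Finset.range N, ww (i + k) = LL k - LL (N + k) := by
    intro N
    have : ∀ i, ww (i + k) = LL (i + k) - LL ((i+1) + k) := by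
      intro i; rw [ww]; congr 2; omega
    calc ∑ i ∈ Finset.range N, ww (i + k)
        = ∑ i ∈ Finset.range N, (LL (i + k) - LL ((i+1) + k)) := by
          exact Finset.sum_congr rfl fun i _ => this i
      _ = LL (0 + k) - LL (N + k) := Finset.sum_range_sub' (fun i => LL (i + k)) N
      _ = LL k - LL (N + k) := by rw [Nat.zero_add]
  have hsum : Summable fun n => ww (n + k) :=
    summable_of_sum_range_le (fun n => ww_nonneg _)
      (fun n => by rw [key n]; have := LL_pos (n + k); linarith)
  rw [hsum.hasSum_iff_tendsto_nat]
  apply Tendsto.congr (fun N => (key N).symm)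
  have : Tendsto (fun N : ℕ => LL (N + k)) atTop (𝓝 0) :=
    LL_tendsto.comp (tendsto_add_atTop_nat k)
  simpa using tendsto_const_nhds.sub this

lemma summable_ww : Summable ww := by
  have := (hasSum_ww_add 0).summable; simpa using this

lemma tsum_ww_add (k : ℕ) : ∑' n, ww (n + k) = LL k := (hasSum_ww_add k).tsum_eq

lemma tsum_ww : ∑' n, ww n = 1 := by
  have := (hasSum_ww_add 0).tsum_eq
  simp only [Nat.add_zero] at this
  rw [this, LL]; norm_num

end Stmt11
-- appended to main
namespace Stmt11

noncomputable def wt (ω : ℕ → ZMod 2) (n : ℕ) : ℝ := if ω n = 1 then ww n else 0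

lemma wt_nonneg (ω : ℕ → ZMod 2) (n : ℕ) : 0 ≤ wt ω n := by
  rw [wt]; split <;> simp [ww_nonneg n]

lemma wt_le (ω : ℕ → ZMod 2) (n : ℕ) : wt ω n ≤ ww n := by
  rw [wt]; split <;> simp [ww_nonneg n]

lemma summable_wt (ω : ℕ → ZMod 2) : Summable (wt ω) :=
  Summable.of_nonneg_of_le (wt_nonneg ω) (wt_le ω) summable_ww

noncomputable def gmap (ω : ℕ → ZMod 2) : ℝ := ∑' n, wt ω n

lemma gmap_nonneg (ω : ℕ → ZMod 2) : 0 ≤ gmap ω := tsum_nonneg (wt_nonneg ω)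

lemma gmap_le_one (ω : ℕ → ZMod 2) : gmap ω ≤ 1 := by
  rw [gmap, ← tsum_ww]
  exact Summable.tsum_le_tsum (wt_le ω) (summable_wt ω) summable_ww

lemma continuous_gmap : Continuous gmap := by
  show Continuous fun ω : ℕ → ZMod 2 => ∑' n, wt ω n
  refine continuous_tsum (fun n => ?_) summable_ww (fun n ω => ?_)
  · show Continuous fun ω : ℕ → ZMod 2 => (fun z : ZMod 2 => if z = 1 then ww n else 0) (ω n)
    exact (continuous_of_discreteTopology (f := fun z : ZMod 2 => if z = 1 then ww n else 0)).comp (continuous_apply n)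
  · rw [Real.norm_eq_abs, abs_of_nonneg (wt_nonneg ω n)]; exact wt_le ω n

lemma measurable_gmap : Measurable gmap := continuous_gmap.measurable

/-- partial sums vs gmap -/
lemma gmap_mem (ω : ℕ → ZMod 2) (k : ℕ) :
    gmap ω ∈ Set.Icc (∑ n ∈ Finset.range k, wt ω n) ((∑ n ∈ Finset.range k, wt ω n) + LL k) := by
  have hsplit := Summable.sum_add_tsum_nat_add k (summable_wt ω)
  have htail_nonneg : 0 ≤ ∑' n, wt ω (n + k) :=
    tsum_nonneg fun n => wt_nonneg ω (n + k)
  have htail_le : ∑' n, wt ω (n + k) ≤ LL k := by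
    rw [← tsum_ww_add k]
    exact Summable.tsum_le_tsum (fun n => wt_le ω (n + k))
      ((summable_nat_add_iff k).mpr (summable_wt ω)) (hasSum_ww_add k).summable
  constructor
  · rw [gmap, ← hsplit]; linarith
  · rw [gmap, ← hsplit]; linarith

noncomputable def μ : Measure (ℕ → ZMod 2) := Measure.addHaarMeasure ⊤

instance : μ.IsAddLeftInvariant := Measure.isAddLeftInvariant_addHaarMeasure ⊤

instance : IsProbabilityMeasure μ := by
  constructor
  have := Measure.addHaarMeasure_self (K₀ := (⊤ : TopologicalSpace.PositiveCompacts (ℕ → ZMod 2)))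
  simp at this; exact this

def cylSet (k : ℕ) (f : ℕ → ZMod 2) : Set (ℕ → ZMod 2) := {ω | ∀ n < k, ω n = f n}

lemma measurable_cylSet (k : ℕ) (f : ℕ → ZMod 2) : MeasurableSet (cylSet k f) := by
  have : cylSet k f = ⋂ n ∈ Set.Iio k, (fun ω : ℕ → ZMod 2 => ω n) ⁻¹' {f n} := by
    ext ω; simp [cylSet]
  rw [this]
  exact MeasurableSet.biInter (Set.to_countable _)
    (fun n _ => measurable_pi_apply n (measurableSet_singleton (f n)))

lemma μ_cylSet_eq (k : ℕ) (f : ℕ → ZMod 2) : μ (cylSet k f) = μ (cylSet k (fun _ => 0)) := by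
  set t : ℕ → ZMod 2 := fun n => if n < k then f n else 0 with ht
  have hpre : (t + ·) ⁻¹' (cylSet k f) = cylSet k (fun _ => 0) := by
    ext ω
    simp only [Set.mem_preimage, cylSet, Set.mem_setOf_eq, Pi.add_apply, ht]
    constructor
    · intro h n hn
      have := h n hn
      simp only [if_pos hn] at this
      have : ω n = f n - f n := by linear_combination this
      simpa using this
    · intro h n hn
      simp only [if_pos hn, h n hn, add_zero]
  calc μ (cylSet k f) = μ ((t + ·) ⁻¹' (cylSet k f)) := (measure_preimage_add μ t _).symm
    _ = μ (cylSet k (fun _ => 0)) := by rw [hpre]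

def extp (k : ℕ) (p : Fin k → ZMod 2) : ℕ → ZMod 2 := fun n => if h : n < k then p ⟨n, h⟩ else 0

lemma μ_cyl (k : ℕ) (f : ℕ → ZMod 2) : μ (cylSet k f) = ((2:ℝ≥0∞)^k)⁻¹ := by
  rw [μ_cylSet_eq k f]
  have hdisj : Pairwise (Function.onFun Disjoint fun p : Fin k → ZMod 2 => cylSet k (extp k p)) := by
    intro p q hpq
    rw [Function.onFun, Set.disjoint_left]
    intro ω hω1 hω2
    apply hpq
    funext i
    have h1 := hω1 i i.isLt
    have h2 := hω2 i i.isLt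
    rw [extp] at h1 h2
    rw [dif_pos i.isLt] at h1 h2
    rw [← h1, ← h2]
  have hcover : (⋃ p : Fin k → ZMod 2, cylSet k (extp k p)) = Set.univ := by
    ext ω
    simp only [Set.mem_iUnion, Set.mem_univ, iff_true]
    refine ⟨fun i => ω i, fun n hn => ?_⟩
    rw [extp, dif_pos hn]
  have hsum := measure_iUnion (μ := μ) hdisj (fun p => measurable_cylSet k (extp k p))
  rw [hcover, measure_univ] at hsum
  have heq : ∀ p : Fin k → ZMod 2, μ (cylSet k (extp k p)) = μ (cylSet k (fun _ => 0)) :=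
    fun p => μ_cylSet_eq k (extp k p)
  rw [tsum_fintype] at hsum
  simp only [heq] at hsum
  rw [Finset.sum_const, Finset.card_univ] at hsum
  have hcard : Fintype.card (Fin k → ZMod 2) = 2 ^ k := by
    rw [Fintype.card_fun]; simp [ZMod]
  rw [hcard, nsmul_eq_mul] at hsum
  have h2k : ((2:ℝ≥0∞)^k) ≠ 0 := by positivity
  have h2k' : ((2:ℝ≥0∞)^k) ≠ ⊤ := by
    exact ENNReal.pow_ne_top (by norm_num)
  have : ((2^k : ℕ) : ℝ≥0∞) = (2:ℝ≥0∞)^k := by push_cast; ring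
  rw [this] at hsum
  calc μ (cylSet k (fun _ => 0)) = ((2:ℝ≥0∞)^k)⁻¹ * ((2:ℝ≥0∞)^k * μ (cylSet k (fun _ => 0))) := by
        rw [← mul_assoc, ENNReal.inv_mul_cancel h2k h2k', one_mul]
    _ = ((2:ℝ≥0∞)^k)⁻¹ := by rw [← hsum, mul_one]

end Stmt11
namespace Stmt11

noncomputable def cval (k : ℕ) (p : Fin k → ZMod 2) : ℝ := ∑ n ∈ Finset.range k, wt (extp k p) n

lemma sum_ww_range (m : ℕ) : ∑ n ∈ Finset.range m, ww n = LL 0 - LL m := by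
  rw [show (fun n => ww n) = fun n => LL n - LL (n+1) from rfl]
  exact Finset.sum_range_sub' LL m

lemma sum_ww_Ico (j k : ℕ) (h : j ≤ k) : ∑ n ∈ Finset.Ico j k, ww n = LL j - LL k := by
  rw [Finset.sum_Ico_eq_sub _ h, sum_ww_range, sum_ww_range]; ring

lemma sep_aux (k : ℕ) (p q : Fin k → ZMod 2) (j : ℕ) (hj : j < k)
    (hagree : ∀ m < j, extp k p m = extp k q m)
    (hp : ¬ extp k p j = 1) (hq : extp k q j = 1) :
    cval k p + LL k ≤ cval k q := by
  have hsplit : ∀ r : Fin k → ZMod 2,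
      cval k r = (∑ n ∈ Finset.range j, wt (extp k r) n) + wt (extp k r) j
        + ∑ n ∈ Finset.Ico (j+1) k, wt (extp k r) n := by
    intro r
    rw [cval, Finset.range_eq_Ico,
      ← Finset.sum_Ico_consecutive _ (Nat.zero_le (j+1)) (Nat.succ_le_of_lt hj),
      ← Finset.range_eq_Ico, Finset.sum_range_succ]
  have h1 : ∑ n ∈ Finset.range j, wt (extp k p) n = ∑ n ∈ Finset.range j, wt (extp k q) n := by
    refine Finset.sum_congr rfl fun n hn => ?_
    rw [wt, wt, hagree n (Finset.mem_range.mp hn)]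
  have h2 : wt (extp k p) j = 0 := by rw [wt, if_neg hp]
  have h3 : wt (extp k q) j = ww j := by rw [wt, if_pos hq]
  have h4 : ∑ n ∈ Finset.Ico (j+1) k, wt (extp k p) n ≤ LL (j+1) - LL k := by
    rw [← sum_ww_Ico (j+1) k (Nat.succ_le_of_lt hj)]
    exact Finset.sum_le_sum fun n _ => wt_le _ n
  have h5 : (0:ℝ) ≤ ∑ n ∈ Finset.Ico (j+1) k, wt (extp k q) n :=
    Finset.sum_nonneg fun n _ => wt_nonneg _ n
  have h6 := two_LL_succ_le j
  have hww : ww j = LL j - LL (j+1) := rfl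
  rw [hsplit p, hsplit q, h1, h2, h3]
  linarith

lemma sep (k : ℕ) (p q : Fin k → ZMod 2) (hpq : p ≠ q) :
    cval k p + LL k ≤ cval k q ∨ cval k q + LL k ≤ cval k p := by
  have hex : ∃ n, n < k ∧ extp k p n ≠ extp k q n := by
    obtain ⟨i, hi⟩ := Function.ne_iff.mp hpq
    refine ⟨i.val, i.isLt, ?_⟩
    rw [extp, extp, dif_pos i.isLt, dif_pos i.isLt]
    simpa [Fin.eta] using hi
  classical
  let j := Nat.find hex
  obtain ⟨hjk, hjne⟩ : j < k ∧ extp k p j ≠ extp k q j := Nat.find_spec hex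
  have hagree : ∀ m < j, extp k p m = extp k q m := by
    intro m hm
    by_contra hc
    have hmk : m < k := lt_trans hm hjk
    exact Nat.find_min hex hm ⟨hmk, hc⟩
  have hz : ∀ z : ZMod 2, z = 0 ∨ z = 1 := by decide
  rcases hz (extp k q j) with hq0 | hq1
  · rcases hz (extp k p j) with hp0 | hp1
    · exact absurd (hp0.trans hq0.symm) hjne
    · right
      refine sep_aux k q p j hjk (fun m hm => (hagree m hm).symm) ?_ hp1
      rw [hq0]; decide
  · left
    refine sep_aux k p q j hjk hagree ?_ hq1
    intro hc; exact hjne (hc.trans hq1.symm)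

noncomputable def σ : Measure ℝ := μ.map gmap

lemma gmap_mem_cval (ω : ℕ → ZMod 2) (k : ℕ) :
    gmap ω ∈ Set.Icc (cval k (fun i => ω i)) (cval k (fun i => ω i) + LL k) := by
  have hc : cval k (fun i => ω i) = ∑ n ∈ Finset.range k, wt ω n := by
    refine Finset.sum_congr rfl fun n hn => ?_
    rw [wt, wt, extp, dif_pos (Finset.mem_range.mp hn)]
  rw [hc]
  exact gmap_mem ω k

lemma keybound (k : ℕ) (a b : ℝ) (hab : a ≤ b) :
    σ (Set.Icc a b) ≤ ENNReal.ofReal ((b - a + 2 * LL k) * (k+1)) := by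
  classical
  have hσ : σ (Set.Icc a b) = μ (gmap ⁻¹' Set.Icc a b) :=
    Measure.map_apply measurable_gmap measurableSet_Icc
  set P : Finset (Fin k → ZMod 2) :=
    Finset.univ.filter (fun p => cval k p ≤ b ∧ a - LL k ≤ cval k p) with hP
  -- cover
  have hcover : gmap ⁻¹' Set.Icc a b ⊆ ⋃ p ∈ P, cylSet k (extp k p) := by
    intro ω hω
    obtain ⟨ha', hb'⟩ := hω
    set p : Fin k → ZMod 2 := fun i => ω i with hpdef
    obtain ⟨hg1, hg2⟩ := gmap_mem_cval ω k
    have hmem : p ∈ P := by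
      rw [hP, Finset.mem_filter]
      exact ⟨Finset.mem_univ _, by linarith, by linarith⟩
    refine Set.mem_biUnion hmem ?_
    intro n hn
    rw [extp, dif_pos hn]
  have hμP : μ (gmap ⁻¹' Set.Icc a b) ≤ (P.card : ℝ≥0∞) * ((2:ℝ≥0∞)^k)⁻¹ := by
    calc μ (gmap ⁻¹' Set.Icc a b) ≤ μ (⋃ p ∈ P, cylSet k (extp k p)) := measure_mono hcover
      _ ≤ ∑ p ∈ P, μ (cylSet k (extp k p)) := measure_biUnion_finset_le P _
      _ = ∑ p ∈ P, ((2:ℝ≥0∞)^k)⁻¹ := by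
          exact Finset.sum_congr rfl fun p _ => μ_cyl k (extp k p)
      _ = (P.card : ℝ≥0∞) * ((2:ℝ≥0∞)^k)⁻¹ := by
          rw [Finset.sum_const, nsmul_eq_mul]
  -- counting
  have hcount : (P.card : ℝ) * LL k ≤ (b - a) + 2 * LL k := by
    have hdisj : (P : Set (Fin k → ZMod 2)).PairwiseDisjoint
        (fun p => Set.Ioo (cval k p) (cval k p + LL k)) := by
      intro p _ q _ hpq
      rw [Function.onFun, Set.disjoint_left]
      intro x hx1 hx2
      rcases sep k p q hpq with h | h
      · obtain ⟨h1, h2⟩ := hx1; obtain ⟨h3, h4⟩ := hx2; linarith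
      · obtain ⟨h1, h2⟩ := hx1; obtain ⟨h3, h4⟩ := hx2; linarith
    have hvol := measure_biUnion_finset (μ := volume) hdisj
      (fun p _ => measurableSet_Ioo)
    have hsub : (⋃ p ∈ P, Set.Ioo (cval k p) (cval k p + LL k))
        ⊆ Set.Ioo (a - LL k) (b + LL k) := by
      intro x hx
      obtain ⟨p, hp, hxp⟩ := Set.mem_iUnion₂.mp hx
      rw [hP, Finset.mem_filter] at hp
      obtain ⟨-, hp1, hp2⟩ := hp
      obtain ⟨h1, h2⟩ := hxp
      exact ⟨by linarith, by linarith⟩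
    have hle : ∑ p ∈ P, volume (Set.Ioo (cval k p) (cval k p + LL k))
        ≤ volume (Set.Ioo (a - LL k) (b + LL k)) := by
      rw [← hvol]; exact measure_mono hsub
    rw [Real.volume_Ioo] at hle
    have heach : ∀ p ∈ P, volume (Set.Ioo (cval k p) (cval k p + LL k))
        = ENNReal.ofReal (LL k) := by
      intro p _; rw [Real.volume_Ioo]; congr 1; ring
    rw [Finset.sum_congr rfl heach, Finset.sum_const, nsmul_eq_mul] at hle
    have hcast : (P.card : ℝ≥0∞) * ENNReal.ofReal (LL k) = ENNReal.ofReal (P.card * LL k) := by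
      rw [ENNReal.ofReal_mul (by positivity), ENNReal.ofReal_natCast]
    rw [hcast] at hle
    have := (ENNReal.ofReal_le_ofReal_iff (by have := LL_pos k; linarith)).mp hle
    linarith
  -- combine
  rw [hσ]
  refine hμP.trans ?_
  have h2k : ((2:ℝ≥0∞)^k)⁻¹ = ENNReal.ofReal ((1/2)^k) := by
    have h2 : ((2:ℝ≥0∞)^k) = ENNReal.ofReal (2^k) := by
      rw [ENNReal.ofReal_pow (by norm_num : (0:ℝ) ≤ 2)]; norm_num
    rw [h2, ← ENNReal.ofReal_inv_of_pos (by positivity : (0:ℝ) < 2^k)]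
    congr 1
    rw [← inv_pow]; norm_num
  rw [h2k, ← ENNReal.ofReal_natCast P.card, ← ENNReal.ofReal_mul (by positivity)]
  apply ENNReal.ofReal_le_ofReal
  have hLL : LL k * (k+1) = (1/2)^k := by
    rw [LL, div_mul_cancel₀]; positivity
  calc (P.card : ℝ) * (1/2)^k = (P.card : ℝ) * LL k * (k+1) := by rw [mul_assoc, hLL]
    _ ≤ ((b - a) + 2 * LL k) * (k+1) := by
        apply mul_le_mul_of_nonneg_right hcount (by positivity)
    _ = (b - a + 2 * LL k) * (k+1) := by ring

end Stmt11
namespace Stmt11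

def A : Set ℝ := Set.range gmap

lemma A_compact : IsCompact A := isCompact_range continuous_gmap

lemma A_subset : A ⊆ Set.Icc 0 1 := by
  rintro x ⟨ω, rfl⟩
  exact ⟨gmap_nonneg ω, gmap_le_one ω⟩

instance : IsProbabilityMeasure σ := Measure.isProbabilityMeasure_map measurable_gmap.aemeasurable

lemma σ_compl_A : σ Aᶜ = 0 := by
  rw [σ, Measure.map_apply measurable_gmap (A_compact.isClosed.measurableSet.compl)]
  have : gmap ⁻¹' Aᶜ = ∅ := by
    rw [Set.preimage_compl, show A = Set.range gmap from rfl, Set.preimage_range, Set.compl_univ]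
  rw [this, measure_empty]

lemma σ_A : σ A = 1 := by
  rw [σ, Measure.map_apply measurable_gmap A_compact.isClosed.measurableSet,
    show A = Set.range gmap from rfl, Set.preimage_range, measure_univ]

lemma volume_A : volume A = 0 := by
  have hbound : ∀ k : ℕ, volume A ≤ ENNReal.ofReal (1/((k:ℝ)+1)) := by
    intro k
    have hsub : A ⊆ ⋃ p : Fin k → ZMod 2, Set.Icc (cval k p) (cval k p + LL k) := by
      rintro x ⟨ω, rfl⟩
      exact Set.mem_iUnion.mpr ⟨fun i => ω i, gmap_mem_cval ω k⟩
    calc volume A ≤ ∑' p : Fin k → ZMod 2, volume (Set.Icc (cval k p) (cval k p + LL k)) :=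
          (measure_mono hsub).trans (measure_iUnion_le _)
      _ = ∑' p : Fin k → ZMod 2, ENNReal.ofReal (LL k) := by
          congr 1; funext p; rw [Real.volume_Icc]; congr 1; ring
      _ = (Fintype.card (Fin k → ZMod 2) : ℝ≥0∞) * ENNReal.ofReal (LL k) := by
          rw [tsum_fintype, Finset.sum_const, nsmul_eq_mul, Finset.card_univ]
      _ = ENNReal.ofReal ((2^k : ℝ) * LL k) := by
          rw [ENNReal.ofReal_mul (by positivity)]
          congr 1
          rw [← ENNReal.ofReal_natCast (Fintype.card (Fin k → ZMod 2))]
          congr 1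
          rw [Fintype.card_fun]
          simp [ZMod]
      _ = ENNReal.ofReal (1/((k:ℝ)+1)) := by
          congr 1
          rw [LL, ← mul_div_assoc, ← mul_pow]
          norm_num
  refine le_antisymm ?_ zero_le
  have htend : Tendsto (fun k : ℕ => ENNReal.ofReal (1/((k:ℝ)+1))) atTop (𝓝 0) := by
    have h0 : Tendsto (fun k : ℕ => 1/((k:ℝ)+1)) atTop (𝓝 0) :=
      tendsto_one_div_add_atTop_nhds_zero_nat
    have := (ENNReal.tendsto_ofReal h0)
    simpa using this
  exact ge_of_tendsto' htend hbound

lemma σ_singleton (x : ℝ) : σ {x} = 0 := by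
  have hbound : ∀ k : ℕ, σ {x} ≤ ENNReal.ofReal ((2 * LL k) * (k+1)) := by
    intro k
    have h1 : σ {x} ≤ σ (Set.Icc x x) := by
      apply measure_mono; intro y hy; rw [hy]; exact ⟨le_rfl, le_rfl⟩
    refine h1.trans ?_
    have := keybound k x x le_rfl
    simpa using this
  refine le_antisymm ?_ zero_le
  have heq : ∀ k : ℕ, (2 * LL k) * ((k:ℝ)+1) = 2 * (1/2:ℝ)^k := by
    intro k; rw [LL]; field_simp
  have htend : Tendsto (fun k : ℕ => ENNReal.ofReal ((2 * LL k) * (k+1))) atTop (𝓝 0) := by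
    have h0 : Tendsto (fun k : ℕ => (2 * LL k) * ((k:ℝ)+1)) atTop (𝓝 0) := by
      simp only [heq]
      have := (tendsto_pow_atTop_nhds_zero_of_lt_one
        (by norm_num : (0:ℝ) ≤ 1/2) (by norm_num : (1/2:ℝ) < 1)).const_mul (2:ℝ)
      simpa using this
    have := ENNReal.tendsto_ofReal h0
    simpa using this
  exact ge_of_tendsto' htend hbound

/-- main logarithmic estimate -/
lemma σ_log_bound (a b : ℝ) (hab : a < b) (hlen : b - a < 1/2) :
    σ (Set.Icc a b) ≤ ENNReal.ofReal (8 * |Real.log (b - a)| * (b - a)) := by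
  set δ := b - a with hδ
  have hδ0 : 0 < δ := by linarith
  have hex : ∃ n : ℕ, (1/2:ℝ)^n ≤ δ := by
    obtain ⟨n, hn⟩ := exists_pow_lt_of_lt_one hδ0 (by norm_num : (1/2:ℝ) < 1)
    exact ⟨n, hn.le⟩
  classical
  set k := Nat.find hex with hk
  have hkle : (1/2:ℝ)^k ≤ δ := Nat.find_spec hex
  have hk2 : 2 ≤ k := by
    rw [hk, Nat.le_find_iff]
    intro m hm
    interval_cases m <;> simp <;> linarith
  have hklt : δ < (1/2:ℝ)^(k-1) := by
    have := Nat.find_min hex (m := k - 1) (by omega)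
    push_neg at this
    exact this
  have hkey := keybound k a b hab.le
  refine hkey.trans (ENNReal.ofReal_le_ofReal ?_)
  -- real arithmetic
  have hLL : LL k * ((k:ℝ)+1) = (1/2)^k := by
    rw [LL, div_mul_cancel₀]; positivity
  have hlog2 : (0.6931471803 : ℝ) < Real.log 2 := Real.log_two_gt_d9
  have hlogδ : Real.log δ ≤ -(((k:ℝ)-1) * Real.log 2) := by
    have h1 : Real.log δ ≤ Real.log ((1/2:ℝ)^(k-1)) :=
      Real.log_le_log (by positivity) hklt.le
    rw [Real.log_pow] at h1
    have h2 : Real.log (1/2:ℝ) = -Real.log 2 := by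
      rw [one_div, Real.log_inv]
    rw [h2] at h1
    have hcast : ((k - 1 : ℕ) : ℝ) = (k:ℝ) - 1 := by
      have : 1 ≤ k := by omega
      push_cast [this]; ring
    rw [hcast] at h1
    linarith
  have habs : ((k:ℝ)-1) * Real.log 2 ≤ |Real.log δ| := by
    have h0 : (0:ℝ) ≤ ((k:ℝ)-1) * Real.log 2 := by
      have : (2:ℝ) ≤ (k:ℝ) := by exact_mod_cast hk2
      nlinarith
    calc ((k:ℝ)-1) * Real.log 2 ≤ -Real.log δ := by linarith
      _ ≤ |Real.log δ| := neg_le_abs _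
  have hK : (2:ℝ) ≤ (k:ℝ) := by exact_mod_cast hk2
  have h8 : ((k:ℝ)+3) ≤ 8*(((k:ℝ)-1)*Real.log 2) := by nlinarith
  calc (δ + 2 * LL k) * ((k:ℝ)+1) = δ*((k:ℝ)+1) + 2*(LL k*((k:ℝ)+1)) := by ring
    _ = δ*((k:ℝ)+1) + 2*(1/2:ℝ)^k := by rw [hLL]
    _ ≤ δ*((k:ℝ)+3) := by nlinarith
    _ ≤ δ*(8*(((k:ℝ)-1)*Real.log 2)) := mul_le_mul_of_nonneg_left h8 hδ0.le
    _ ≤ δ * (8 * |Real.log δ|) := by nlinarith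
    _ = 8 * |Real.log δ| * δ := by ring

end Stmt11
namespace Stmt11

lemma frostman (d : ℝ) (hd0 : 0 < d) (hd1 : d < 1) :
    ∃ C : ℝ, 1 ≤ C ∧ ∀ D x : ℝ, 0 < D → D ≤ 1/8 →
      σ (Set.Icc (x - D) (x + D)) ≤ ENNReal.ofReal (C * D ^ d) := by
  set t : ℝ := 1/2 with ht
  have ht0 : (0:ℝ) < t := by norm_num
  have ht1 : t < 1 := by norm_num
  set q : ℝ := t ^ (1 - d) with hqdef
  have hq0 : 0 < q := Real.rpow_pos_of_pos ht0 _
  have hq1 : q < 1 := Real.rpow_lt_one ht0.le ht1 (by linarith)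
  have hsum : Summable (fun k : ℕ => 8 * (((k:ℝ)+3) * q^k)) := by
    have h1 : Summable (fun k : ℕ => (k:ℝ)^1 * q^k) :=
      summable_pow_mul_geometric_of_norm_lt_one 1 (by rwa [Real.norm_eq_abs, abs_of_pos hq0])
    have h2 : Summable (fun k : ℕ => q^k) := summable_geometric_of_lt_one hq0.le hq1
    have h3 := (h1.add (h2.mul_left 3)).mul_left 8
    apply h3.congr
    intro k; push_cast; ring
  obtain ⟨C₀, hC₀⟩ := hsum.tendsto_atTop_zero.bddAbove_range
  have hC₀mem : ∀ k : ℕ, 8 * (((k:ℝ)+3) * q^k) ≤ C₀ := fun k => hC₀ (Set.mem_range_self k)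
  refine ⟨max 1 C₀, le_max_left _ _, ?_⟩
  intro D x hD0 hD8
  have hex : ∃ n : ℕ, t^n ≤ 2*D := by
    obtain ⟨n, hn⟩ := exists_pow_lt_of_lt_one (by linarith : (0:ℝ) < 2*D) ht1
    exact ⟨n, hn.le⟩
  classical
  set k := Nat.find hex with hk
  have hkle : t^k ≤ 2*D := Nat.find_spec hex
  have hk2 : 2 ≤ k := by
    rw [hk, Nat.le_find_iff]
    intro m hm
    interval_cases m <;> (push_neg; simp only [ht]; norm_num) <;> linarith
  have hklt : 2*D < t^(k-1) := by
    have := Nat.find_min hex (m := k-1) (by omega)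
    push_neg at this; exact this
  have hkey := keybound k (x - D) (x + D) (by linarith)
  refine hkey.trans (ENNReal.ofReal_le_ofReal ?_)
  have hLL : LL k * ((k:ℝ)+1) = t^k := by
    rw [LL, div_mul_cancel₀]; positivity
  have hK : (2:ℝ) ≤ (k:ℝ) := by exact_mod_cast hk2
  have hcast : ((k-1:ℕ):ℝ) = (k:ℝ)-1 := by
    have h1 : 1 ≤ k := by omega
    push_cast [h1]; ring
  -- rpow identities
  have hqk : 8 * (q^k * (t^(k+1)) ^ d) = t ^ ((k:ℝ) + d + (-3)) := by
    rw [hqdef, ← Real.rpow_natCast (t ^ (1-d)) k, ← Real.rpow_mul ht0.le,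
        ← Real.rpow_natCast t (k+1), ← Real.rpow_mul ht0.le, ← Real.rpow_add ht0,
        show (8:ℝ) = t ^ (-3:ℝ) by
          rw [ht, show (-3:ℝ) = ((-3:ℤ):ℝ) by norm_num, Real.rpow_intCast]; norm_num,
        ← Real.rpow_add ht0]
    congr 1
    push_cast
    ring
  have hmono : t ^ ((k:ℝ) - 1) ≤ t ^ ((k:ℝ) + d + (-3)) :=
    Real.rpow_le_rpow_of_exponent_ge ht0 ht1.le (by linarith)
  have htk1 : t^(k-1) = t ^ ((k:ℝ) - 1) := by
    rw [← Real.rpow_natCast t (k-1), hcast]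
  -- bound (t^(k+1))^d ≤ D^d
  have htD : t^(k+1) ≤ D := by
    have : t^(k+1) = t^k * t := by ring
    rw [this, ht]; nlinarith
  have hvd : (t^(k+1)) ^ d ≤ D ^ d :=
    Real.rpow_le_rpow (by positivity) htD hd0.le
  have hC0nn : (0:ℝ) ≤ C₀ := le_trans (by positivity) (hC₀mem 0)
  have hDd0 : (0:ℝ) ≤ D ^ d := Real.rpow_nonneg hD0.le d
  -- main chain
  have main : (x + D - (x - D) + 2 * LL k) * ((k:ℝ)+1) ≤ C₀ * D ^ d := by
    have e1 : (x + D - (x - D) + 2 * LL k) * ((k:ℝ)+1)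
        = 2*D*((k:ℝ)+1) + 2*(LL k * ((k:ℝ)+1)) := by ring
    have step1 : (x + D - (x - D) + 2 * LL k) * ((k:ℝ)+1) ≤ 2*D*((k:ℝ)+3) := by
      rw [e1, hLL]; nlinarith
    have step2 : 2*D*((k:ℝ)+3) ≤ t^(k-1) * ((k:ℝ)+3) := by nlinarith
    have step3 : t^(k-1) * ((k:ℝ)+3) ≤ (8 * (q^k * (t^(k+1)) ^ d)) * ((k:ℝ)+3) := by
      rw [hqk, htk1]
      nlinarith
    have step4 : (8 * (q^k * (t^(k+1)) ^ d)) * ((k:ℝ)+3) ≤ C₀ * D ^ d := by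
      have h1 : (8 * (q^k * (t^(k+1)) ^ d)) * ((k:ℝ)+3)
          = (8 * (((k:ℝ)+3) * q^k)) * ((t^(k+1)) ^ d) := by ring
      rw [h1]
      exact mul_le_mul (hC₀mem k) hvd (by positivity) hC0nn
    linarith
  calc (x + D - (x - D) + 2 * LL k) * ((k:ℝ)+1) ≤ C₀ * D ^ d := main
    _ ≤ max 1 C₀ * D ^ d := mul_le_mul_of_nonneg_right (le_max_right _ _) hDd0

lemma dimH_A_ge : 1 ≤ dimH A := by
  apply ENNReal.le_of_forall_nnreal_lt
  intro r hr
  rcases eq_zero_or_pos r with hr0 | hr0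
  · simp [hr0]
  have hr0' : (0:ℝ) < (r:ℝ) := by exact_mod_cast hr0
  have hr1 : (r:ℝ) < 1 := by
    have := hr
    rw [← ENNReal.coe_one, ENNReal.coe_lt_coe] at this
    exact_mod_cast this
  obtain ⟨C, hC1, hC⟩ := frostman (r:ℝ) hr0' hr1
  set Cen : ℝ≥0∞ := ENNReal.ofReal C with hCen
  have hCen0 : Cen ≠ 0 := by
    rw [hCen, Ne, ENNReal.ofReal_eq_zero]; linarith
  have hCenT : Cen ≠ ⊤ := ENNReal.ofReal_ne_top
  have hclaim : ∀ s : Set ℝ, EMetric.diam s ≤ ENNReal.ofReal (1/8) →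
      σ s ≤ Cen * EMetric.diam s ^ (r:ℝ) := by
    intro s hs
    rcases s.eq_empty_or_nonempty with rfl | ⟨x, hx⟩
    · simp
    have hdne : EMetric.diam s ≠ ⊤ := (hs.trans_lt ENNReal.ofReal_lt_top).ne
    set D : ℝ := (EMetric.diam s).toReal with hD
    have hDnn : 0 ≤ D := ENNReal.toReal_nonneg
    have hsub : s ⊆ Set.Icc (x - D) (x + D) := by
      intro y hy
      have h1 : edist y x ≤ EMetric.diam s := EMetric.edist_le_diam_of_mem hy hx
      have h2 : dist y x ≤ D := by
        rw [hD, ← ENNReal.toReal_ofReal dist_nonneg, ← edist_dist]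
        exact ENNReal.toReal_mono hdne h1
      rw [Real.dist_eq] at h2
      constructor <;> [linarith [neg_abs_le (y - x)]; linarith [le_abs_self (y - x)]]
    rcases eq_or_lt_of_le hDnn with hD0 | hD0
    · have hsx : s ⊆ {x} := by
        intro y hy
        have := hsub hy
        rw [← hD0] at this
        simp only [sub_zero, add_zero] at this
        exact Set.mem_singleton_iff.mpr (le_antisymm this.2 this.1)
      calc σ s ≤ σ {x} := measure_mono hsx
        _ = 0 := σ_singleton x
        _ ≤ _ := zero_le
    · have hD8 : D ≤ 1/8 := by
        rw [hD]
        calc (EMetric.diam s).toReal ≤ (ENNReal.ofReal (1/8)).toReal :=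
              ENNReal.toReal_mono ENNReal.ofReal_ne_top hs
          _ = 1/8 := by rw [ENNReal.toReal_ofReal]; norm_num
      calc σ s ≤ σ (Set.Icc (x - D) (x + D)) := measure_mono hsub
        _ ≤ ENNReal.ofReal (C * D ^ (r:ℝ)) := hC D x hD0 hD8
        _ = Cen * ENNReal.ofReal (D ^ (r:ℝ)) := by
            rw [ENNReal.ofReal_mul (by linarith)]
        _ = Cen * EMetric.diam s ^ (r:ℝ) := by
            rw [← ENNReal.ofReal_rpow_of_pos hD0, hD, ENNReal.ofReal_toReal hdne]
  have hmass : Cen⁻¹ • σ ≤ μH[(r:ℝ)] := by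
    apply Measure.le_hausdorffMeasure _ _ (ENNReal.ofReal (1/8)) (by norm_num)
    intro s hs
    rw [Measure.smul_apply, smul_eq_mul]
    calc Cen⁻¹ * σ s ≤ Cen⁻¹ * (Cen * EMetric.diam s ^ (r:ℝ)) := by
          exact mul_le_mul_right (hclaim s hs) _
      _ = EMetric.diam s ^ (r:ℝ) := by
          rw [← mul_assoc, ENNReal.inv_mul_cancel hCen0 hCenT, one_mul]
  have hA : Cen⁻¹ ≤ μH[(r:ℝ)] A := by
    have h1 : (Cen⁻¹ • σ) A ≤ μH[(r:ℝ)] A := hmass A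
    rw [Measure.smul_apply, smul_eq_mul, σ_A, mul_one] at h1
    exact h1
  have hne : μH[(r:ℝ)] A ≠ 0 := by
    intro h0
    rw [h0] at hA
    exact (ENNReal.inv_ne_zero.mpr hCenT) (le_antisymm hA zero_le).symm.symm
    -- fix later if needed
  exact le_dimH_of_hausdorffMeasure_ne_zero hne

lemma dimH_A : dimH A = 1 :=
  le_antisymm ((dimH_mono (Set.subset_univ A)).trans_eq Real.dimH_univ) dimH_A_ge

end Stmt11
theorem stmt11 :
    ∃ (A : Set ℝ) (σ₀ : Measure ℝ) (c₀ : ℝ),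
      A ⊆ Set.Icc 0 1 ∧ IsCompact A ∧ volume A = 0 ∧ dimH A = 1 ∧
      IsProbabilityMeasure σ₀ ∧ σ₀ Aᶜ = 0 ∧ 0 < c₀ ∧
      ∀ a b : ℝ, a < b → b - a < 1 / 2 → Set.Icc a b ⊆ Set.Icc 0 1 →
        σ₀ (Set.Icc a b) ≤ ENNReal.ofReal (c₀ * |Real.log (b - a)| * (b - a)) := by
  exact ⟨Stmt11.A, Stmt11.σ, 8, Stmt11.A_subset, Stmt11.A_compact, Stmt11.volume_A,
    Stmt11.dimH_A, inferInstance, Stmt11.σ_compl_A, by norm_num,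
    fun a b hab hlen _ => Stmt11.σ_log_bound a b hab hlen⟩
end

section
/- Let $\{\ell_n\}$ be decreasing with $0<\ell_n<1$ and suppose $\sum_{n=1}^\infty n^{-2} e^{a(\ell_1+\cdots+\ell_n)} < \infty$ for some $a>0$. Then $\sum_{n=1}^\infty \ell_n^2 < \infty$. -/
open Finset Filter Asymptotics Real

theorem stmt13 (ℓ : ℕ → ℝ) (hdec : Antitone ℓ) (hpos : ∀ n, 0 < ℓ n) (hlt : ∀ n, ℓ n < 1)
    (a : ℝ) (ha : 0 < a)
    (hsum : Summable (fun n : ℕ =>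
      (1 / (n : ℝ) ^ 2) * Real.exp (a * ∑ k ∈ Finset.Icc 1 n, ℓ k))) :
    Summable (fun n : ℕ => (ℓ n) ^ 2) := by
  -- terms tend to 0, so eventually e^{aS_n} ≤ n², hence a n ℓ n ≤ 2 log n
  have h0 := hsum.tendsto_atTop_zero
  have hev : ∀ᶠ n : ℕ in atTop,
      (1 / (n : ℝ) ^ 2) * Real.exp (a * ∑ k ∈ Finset.Icc 1 n, ℓ k) ≤ 1 :=
    h0.eventually (eventually_le_nhds one_pos)
  have key : ∀ᶠ n : ℕ in atTop, ℓ n ≤ 2 / a * (Real.log n / n) := by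
    filter_upwards [hev, eventually_ge_atTop 1] with n hn hn1
    have hnpos : (0 : ℝ) < (n : ℝ) := by exact_mod_cast hn1
    have hsq : (0 : ℝ) < (n : ℝ) ^ 2 := by positivity
    have h1 : Real.exp (a * ∑ k ∈ Finset.Icc 1 n, ℓ k) ≤ (n : ℝ) ^ 2 := by
      have := (div_le_one hsq).mp (by simpa [one_div, div_eq_inv_mul] using hn)
      linarith [this]
    have h2 : a * ∑ k ∈ Finset.Icc 1 n, ℓ k ≤ 2 * Real.log n := by
      have := Real.log_le_log (Real.exp_pos _) h1
      rw [Real.log_exp] at this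
      calc a * ∑ k ∈ Finset.Icc 1 n, ℓ k ≤ Real.log ((n : ℝ) ^ 2) := this
        _ = 2 * Real.log n := by
            rw [Real.log_pow]; push_cast; ring
    have h3 : (n : ℝ) * ℓ n ≤ ∑ k ∈ Finset.Icc 1 n, ℓ k := by
      have : ∀ k ∈ Finset.Icc 1 n, ℓ n ≤ ℓ k := fun k hk =>
        hdec (Finset.mem_Icc.mp hk).2
      calc (n : ℝ) * ℓ n = ∑ _k ∈ Finset.Icc 1 n, ℓ n := by
            rw [Finset.sum_const, Nat.card_Icc]; simp [nsmul_eq_mul]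
        _ ≤ ∑ k ∈ Finset.Icc 1 n, ℓ k := Finset.sum_le_sum this
    have h4 : a * ((n : ℝ) * ℓ n) ≤ 2 * Real.log n :=
      le_trans (by nlinarith [h3, ha.le]) h2
    have h5 : ℓ n ≤ 2 * Real.log n / (a * n) := by
      rw [le_div_iff₀ (by positivity)]
      nlinarith [h4]
    calc ℓ n ≤ 2 * Real.log n / (a * n) := h5
      _ = 2 / a * (Real.log n / n) := by field_simp
  -- hence ℓ n ^ 2 = O((log n / n)^2) = o(n^{-3/2}), which is summable
  have hO : (fun n : ℕ => (ℓ n) ^ 2) =O[atTop]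
      fun n : ℕ => (Real.log n / n) ^ 2 := by
    apply IsBigO.of_bound ((2 / a) ^ 2)
    filter_upwards [key] with n hn
    have h0 : 0 ≤ ℓ n := (hpos n).le
    have h1 : 0 ≤ 2 / a * (Real.log n / n) := le_trans h0 hn
    rw [Real.norm_eq_abs, Real.norm_eq_abs, abs_of_nonneg (sq_nonneg _),
      abs_of_nonneg (sq_nonneg _)]
    nlinarith [hn, h0, h1]
  have ho : (fun x : ℝ => (Real.log x / x) ^ 2) =o[atTop]
      fun x : ℝ => x ^ (-(3/2 : ℝ)) := by
    have h1 : (fun x : ℝ => Real.log x ^ (2:ℝ)) =o[atTop]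
        fun x : ℝ => x ^ ((1:ℝ)/2) := isLittleO_log_rpow_rpow_atTop 2 (by norm_num)
    have h2 := h1.mul_isBigO (isBigO_refl (fun x : ℝ => (x ^ 2)⁻¹) atTop)
    refine (EventuallyEq.trans_isLittleO ?_ h2).trans_eventuallyEq ?_
    · filter_upwards [eventually_gt_atTop (0:ℝ)] with x hx
      rw [div_pow, div_eq_mul_inv, Real.rpow_two]
    · filter_upwards [eventually_gt_atTop (0:ℝ)] with x hx
      rw [← Real.rpow_natCast x 2, ← Real.rpow_neg hx.le, ← Real.rpow_add hx]
      norm_num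
  have hoN : (fun n : ℕ => (Real.log n / n) ^ 2) =o[atTop]
      fun n : ℕ => (n : ℝ) ^ (-(3/2 : ℝ)) :=
    ho.comp_tendsto tendsto_natCast_atTop_atTop
  have hsum2 : Summable (fun n : ℕ => (n : ℝ) ^ (-(3/2 : ℝ))) :=
    Real.summable_nat_rpow.mpr (by norm_num)
  exact summable_of_isBigO_nat hsum2 (hO.trans hoN.isBigO)
end

section
/- Let $\{\ell_n\}$ satisfy $\limsup_{n\to\infty}(\ell_1+\cdots+\ell_n)/\ln n \geq 1/m$ with $m>0$. Then for every $\varepsilon>0$ and every integer $r\geq 1$ with $\frac{(1-\varepsilon)}{m}(1-2^{-r}) \cdot a > 1$ for a given $a > m$, the tail sums $\sum_{n=(2^r-1)q+1}^{2^r q} n^{-2} e^{a(\ell_1+\cdots+\ell_n)}$ are unbounded as $q$ ranges over a suitable subsequence; in particular $\sum_{n=1}^\infty n^{-2} e^{a(\ell_1+\cdots+\ell_n)} = \infty$ for every $a>m$. -/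
open Filter Finset

private theorem auxSumMono (ℓ : ℕ → ℝ) (hpos : ∀ n, 0 < ℓ n) :
    Monotone (fun n => ∑ k ∈ Finset.Icc 1 n, ℓ k) := by
  intro i j hij
  exact Finset.sum_le_sum_of_subset_of_nonneg
    (Finset.Icc_subset_Icc_right hij) (fun k _ _ => (hpos k).le)

private theorem auxSumKey (ℓ : ℕ → ℝ) (hdec : Antitone ℓ) (hpos : ∀ n, 0 < ℓ n) (r q : ℕ)
    (hq : 1 ≤ q) :
    (1 - 1/(2:ℝ)^r) * ∑ k ∈ Finset.Icc 1 (2^r * q), ℓ k ≤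
      ∑ k ∈ Finset.Icc 1 ((2^r - 1) * q), ℓ k := by
  have h2 : 1 ≤ 2^r := Nat.one_le_two_pow
  set p := (2^r - 1) * q with hp
  have hpN : p + q = 2^r * q := by
    have : (2^r - 1) * q + q = 2^r * q := by
      cases' Nat.exists_eq_add_of_le h2 with t ht
      rw [ht]; simp; ring
    simpa [hp] using this
  have hsplit : ∑ k ∈ Finset.Icc 1 (2^r*q), ℓ k
      = (∑ k ∈ Finset.Icc 1 p, ℓ k) + ∑ k ∈ Finset.Ioc p (2^r*q), ℓ k := by
    rw [show Finset.Icc 1 (2^r*q) = Finset.Ioc 0 (2^r*q) from by rw [← Finset.Icc_add_one_left_eq_Ioc, zero_add],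
        show Finset.Icc 1 p = Finset.Ioc 0 p from by rw [← Finset.Icc_add_one_left_eq_Ioc, zero_add]]
    exact (Finset.sum_Ioc_consecutive ℓ (Nat.zero_le p) (by omega)).symm
  set Sp := ∑ k ∈ Finset.Icc 1 p, ℓ k with hSp
  set T := ∑ k ∈ Finset.Ioc p (2^r*q), ℓ k with hT
  have hTle : T ≤ q * ℓ (p+1) := by
    have := Finset.sum_le_card_nsmul (Finset.Ioc p (2^r*q)) ℓ (ℓ (p+1))
      (fun i hi => hdec (Finset.mem_Ioc.mp hi).1)
    rw [Nat.card_Ioc] at this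
    have hcard : 2^r*q - p = q := by omega
    rw [hcard] at this
    simpa [nsmul_eq_mul] using this
  have hSge : (p:ℝ) * ℓ (p+1) ≤ Sp := by
    have := Finset.card_nsmul_le_sum (Finset.Icc 1 p) ℓ (ℓ (p+1))
      (fun i hi => hdec (by have := (Finset.mem_Icc.mp hi).2; omega))
    rw [Nat.card_Icc] at this
    have hcard : p + 1 - 1 = p := by omega
    rw [hcard] at this
    simpa [nsmul_eq_mul] using this
  have hpq : (p:ℝ) = ((2:ℝ)^r - 1) * q := by
    rw [hp]; push_cast [Nat.cast_sub h2]; ring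
  have hx : (0:ℝ) < (2:ℝ)^r := by positivity
  have h1 : ((2:ℝ)^r - 1) * T ≤ Sp := by
    calc ((2:ℝ)^r - 1) * T ≤ ((2:ℝ)^r - 1) * (q * ℓ (p+1)) := by
          apply mul_le_mul_of_nonneg_left hTle
          have : (1:ℝ) ≤ (2:ℝ)^r := one_le_pow₀ (by norm_num)
          linarith
      _ = (p:ℝ) * ℓ (p+1) := by rw [hpq]; ring
      _ ≤ Sp := hSge
  rw [hsplit]
  rw [show (1 - 1/(2:ℝ)^r) = ((2:ℝ)^r - 1)/(2:ℝ)^r from by field_simp]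
  rw [div_mul_eq_mul_div, div_le_iff₀ hx]
  nlinarith [h1]


theorem stmt15 (ℓ : ℕ → ℝ) (m : ℝ) (hm : 0 < m)
    (hdec : Antitone ℓ) (hpos : ∀ n, 0 < ℓ n) (hlt : ∀ n, ℓ n < 1)
    (hlimsup : ((1 / m : ℝ) : EReal) ≤
      Filter.limsup (fun n : ℕ =>
        (((∑ k ∈ Finset.Icc 1 n, ℓ k) / Real.log n : ℝ) : EReal)) atTop) :
    (∀ a : ℝ, m < a → ∀ ε : ℝ, 0 < ε → ∀ r : ℕ, 1 ≤ r →
      1 < ((1 - ε) / m) * (1 - 1 / (2 : ℝ) ^ r) * a →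
      ∀ C : ℝ, ∃ q : ℕ, 1 ≤ q ∧
        C < ∑ n ∈ Finset.Icc ((2 ^ r - 1) * q + 1) (2 ^ r * q),
          (1 / (n : ℝ) ^ 2) * Real.exp (a * ∑ k ∈ Finset.Icc 1 n, ℓ k))
    ∧ ∀ a : ℝ, m < a →
      ¬ Summable (fun n : ℕ =>
        (1 / (n : ℝ) ^ 2) * Real.exp (a * ∑ k ∈ Finset.Icc 1 n, ℓ k)) := by
  set S : ℕ → ℝ := fun n => ∑ k ∈ Finset.Icc 1 n, ℓ k with hS
  have hmono : Monotone S := auxSumMono ℓ hpos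
  -- frequently lemma
  have hfreq : ∀ c : ℝ, c < 1/m → ∀ N : ℕ,
      ∃ n : ℕ, N ≤ n ∧ 2 ≤ n ∧ c * Real.log n ≤ S n := by
    intro c hc N
    by_contra h
    push_neg at h
    have hev : ∀ᶠ n : ℕ in atTop,
        (((∑ k ∈ Finset.Icc 1 n, ℓ k) / Real.log n : ℝ) : EReal) ≤ (c : EReal) := by
      filter_upwards [eventually_ge_atTop (max N 2)] with n hn
      have hN : N ≤ n := le_trans (le_max_left _ _) hn
      have h2 : 2 ≤ n := le_trans (le_max_right _ _) hn
      have hlog : 0 < Real.log n := Real.log_pos (by exact_mod_cast by omega)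
      have := h n hN h2
      rw [EReal.coe_le_coe_iff, div_le_iff₀ hlog]
      nlinarith
    have hle := Filter.limsup_le_of_le (by isBoundedDefault) hev
    have := le_trans hlimsup hle
    rw [EReal.coe_le_coe_iff] at this
    linarith
  have P1 : ∀ a : ℝ, m < a → ∀ ε : ℝ, 0 < ε → ∀ r : ℕ, 1 ≤ r →
      1 < ((1 - ε) / m) * (1 - 1 / (2 : ℝ) ^ r) * a →
      ∀ C : ℝ, ∃ q : ℕ, 1 ≤ q ∧
        C < ∑ n ∈ Finset.Icc ((2 ^ r - 1) * q + 1) (2 ^ r * q),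
          (1 / (n : ℝ) ^ 2) * Real.exp (a * ∑ k ∈ Finset.Icc 1 n, ℓ k) := by
    intro a ha ε hε r hr hb C
    set c : ℝ := (1 - ε)/m with hc
    set b : ℝ := c * (1 - 1/(2:ℝ)^r) * a with hbdef
    have ha0 : 0 < a := hm.trans ha
    have hxpos : (0:ℝ) < (2:ℝ)^r := by positivity
    have hx1 : (1:ℝ) ≤ (2:ℝ)^r := one_le_pow₀ (by norm_num)
    have hfac : 0 < 1 - 1/(2:ℝ)^r := by
      have : 1/(2:ℝ)^r ≤ 1/2 := by
        apply one_div_le_one_div_of_le (by norm_num)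
        calc (2:ℝ) = 2^1 := by norm_num
          _ ≤ 2^r := by apply pow_le_pow_right₀ (by norm_num) hr
      linarith
    have hb1 : 1 < b := hb
    have hcpos : 0 < c := by
      by_contra hcn
      push_neg at hcn
      have : b ≤ 0 := by
        rw [hbdef]
        apply mul_nonpos_of_nonpos_of_nonneg _ ha0.le
        exact mul_nonpos_of_nonpos_of_nonneg hcn hfac.le
      linarith
    have hclt : c < 1/m := by
      rw [hc, div_lt_div_iff_of_pos_right hm]; linarith
    -- choose N₀
    have htend : Tendsto (fun n : ℕ => (n:ℝ)^(b-1)) atTop atTop :=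
      (tendsto_rpow_atTop (by linarith)).comp tendsto_natCast_atTop_atTop
    obtain ⟨N₀, hN₀⟩ := (htend.eventually_gt_atTop ((max C 0 + 1) * ((2:ℝ)^r)^2)).exists_forall_of_atTop
    obtain ⟨n, hnN, hn2, hnlog⟩ := hfreq c hclt N₀
    refine ⟨n, by omega, ?_⟩
    have h2r : 1 ≤ 2^r := Nat.one_le_two_pow
    set p := (2^r - 1) * n with hp
    set N := 2^r * n with hN
    have hpN : p + n = N := by
      have : (2^r - 1) * n + n = 2^r * n := by
        cases' Nat.exists_eq_add_of_le h2r with t ht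
        rw [ht]; simp; ring
      simpa [hp, hN] using this
    have hnN' : n ≤ N := by omega
    have hnpos : (0:ℝ) < n := by exact_mod_cast by omega
    have hNpos : (0:ℝ) < (N:ℝ) := by exact_mod_cast by omega
    -- lower bound on S (p+1)
    have hkey : (1 - 1/(2:ℝ)^r) * S N ≤ S p := auxSumKey ℓ hdec hpos r n (by omega)
    have hSn : c * Real.log n ≤ S N := le_trans hnlog (hmono hnN')
    have hlogpos : 0 ≤ Real.log n := Real.log_nonneg (by exact_mod_cast by omega)
    have hSp1 : b * Real.log n ≤ a * S (p+1) := by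
      have h1 : (1 - 1/(2:ℝ)^r) * (c * Real.log n) ≤ S p :=
        le_trans (mul_le_mul_of_nonneg_left hSn hfac.le) hkey
      have h2 : S p ≤ S (p+1) := hmono (Nat.le_succ p)
      have h3 : a * ((1 - 1/(2:ℝ)^r) * (c * Real.log n)) ≤ a * S (p+1) := by
        apply mul_le_mul_of_nonneg_left (le_trans h1 h2) ha0.le
      calc b * Real.log n = a * ((1 - 1/(2:ℝ)^r) * (c * Real.log n)) := by rw [hbdef]; ring
        _ ≤ a * S (p+1) := h3
    -- lower bound each term
    set B : ℝ := 1/(N:ℝ)^2 * Real.exp (a * S (p+1)) with hB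
    have hterm : ∀ k ∈ Finset.Icc (p+1) N,
        B ≤ (1 / (k : ℝ) ^ 2) * Real.exp (a * S k) := by
      intro k hk
      obtain ⟨hk1, hk2⟩ := Finset.mem_Icc.mp hk
      have hkpos : (0:ℝ) < k := by exact_mod_cast by omega
      apply mul_le_mul
      · apply one_div_le_one_div_of_le (by positivity)
        have : (k:ℝ) ≤ N := by exact_mod_cast hk2
        nlinarith
      · exact Real.exp_le_exp.mpr (mul_le_mul_of_nonneg_left (hmono hk1) ha0.le)
      · positivity
      · positivity
    have hcard : (Finset.Icc (p+1) N).card = n := by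
      rw [Nat.card_Icc]; omega
    have hsum : (n:ℝ) * B ≤ ∑ k ∈ Finset.Icc (p+1) N,
        (1 / (k : ℝ) ^ 2) * Real.exp (a * S k) := by
      have := Finset.card_nsmul_le_sum (Finset.Icc (p+1) N)
        (fun k => (1 / (k : ℝ) ^ 2) * Real.exp (a * S k)) B hterm
      rw [hcard, nsmul_eq_mul] at this
      exact this
    -- final computation
    have hrpow : (n:ℝ)^(b-1) * (n:ℝ) ≤ Real.exp (a * S (p+1)) := by
      have h1 : Real.exp (b * Real.log n) ≤ Real.exp (a * S (p+1)) := Real.exp_le_exp.mpr hSp1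
      have h2 : Real.exp (b * Real.log n) = (n:ℝ)^b := by
        rw [Real.rpow_def_of_pos hnpos]; ring_nf
      have h3 : (n:ℝ)^b = (n:ℝ)^(b-1) * (n:ℝ) := by
        rw [Real.rpow_sub hnpos, Real.rpow_one]
        field_simp
      rw [h2, h3] at h1
      exact h1
    have hNcast : (N:ℝ) = (2:ℝ)^r * n := by rw [hN]; push_cast; ring
    have hfin : C < (n:ℝ) * B := by
      have hBge : 1/(N:ℝ)^2 * ((n:ℝ)^(b-1) * n) ≤ B := by
        rw [hB]
        apply mul_le_mul_of_nonneg_left hrpow (by positivity)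
      have heq : (n:ℝ) * (1/(N:ℝ)^2 * ((n:ℝ)^(b-1) * n)) = (n:ℝ)^(b-1) / ((2:ℝ)^r)^2 := by
        rw [hNcast]; field_simp
      have hlt : (max C 0 + 1) * ((2:ℝ)^r)^2 < (n:ℝ)^(b-1) := hN₀ n hnN
      have h4 : max C 0 + 1 < (n:ℝ)^(b-1) / ((2:ℝ)^r)^2 := by
        rw [lt_div_iff₀ (by positivity)]; exact hlt
      have h5 : C < (n:ℝ) * (1/(N:ℝ)^2 * ((n:ℝ)^(b-1) * n)) := by
        rw [heq]
        have : C ≤ max C 0 := le_max_left _ _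
        linarith
      calc C < (n:ℝ) * (1/(N:ℝ)^2 * ((n:ℝ)^(b-1) * n)) := h5
        _ ≤ (n:ℝ) * B := by apply mul_le_mul_of_nonneg_left hBge hnpos.le
    calc C < (n:ℝ) * B := hfin
      _ ≤ _ := hsum
  refine ⟨P1, ?_⟩
  intro a ha hsum
  set t : ℝ := (a+m)/(2*m) with htdef
  have ha0 : 0 < a := hm.trans ha
  have ht1 : 1 < t := by rw [htdef, lt_div_iff₀ (by linarith)]; linarith
  set ε : ℝ := (a-m)/(2*a) with hεdef
  have hε : 0 < ε := by apply div_pos (by linarith) (by linarith)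
  have hεt : ((1-ε)/m) * a = t := by
    rw [hεdef, htdef]; field_simp; ring
  obtain ⟨r₀, hr₀⟩ := exists_pow_lt_of_lt_one (by
    have : 1/t < 1 := by rw [div_lt_one (by linarith)]; exact ht1
    linarith : (0:ℝ) < 1 - 1/t) (by norm_num : (1:ℝ)/2 < 1)
  set r := max r₀ 1 with hrdef
  have hr1 : 1 ≤ r := le_max_right _ _
  have hrpow : ((1:ℝ)/2)^r < 1 - 1/t := by
    calc ((1:ℝ)/2)^r ≤ ((1:ℝ)/2)^r₀ :=
          pow_le_pow_of_le_one (by norm_num) (by norm_num) (le_max_left _ _)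
      _ < 1 - 1/t := hr₀
  have hhyp : 1 < ((1 - ε) / m) * (1 - 1 / (2 : ℝ) ^ r) * a := by
    have h1 : 1/(2:ℝ)^r = ((1:ℝ)/2)^r := by rw [div_pow]; norm_num
    have h2 : 1/t < 1 - 1/(2:ℝ)^r := by rw [h1]; linarith
    have : t * (1/t) < t * (1 - 1/(2:ℝ)^r) :=
      mul_lt_mul_of_pos_left h2 (by linarith)
    rw [mul_one_div_cancel (by linarith : t ≠ 0)] at this
    calc (1:ℝ) < t * (1 - 1/(2:ℝ)^r) := this
      _ = ((1 - ε) / m) * (1 - 1 / (2 : ℝ) ^ r) * a := by rw [← hεt]; ring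
  obtain ⟨q, hq1, hq2⟩ := P1 a ha ε hε r hr1 hhyp
    (∑' n : ℕ, (1 / (n : ℝ) ^ 2) * Real.exp (a * ∑ k ∈ Finset.Icc 1 n, ℓ k))
  have hle : ∑ n ∈ Finset.Icc ((2 ^ r - 1) * q + 1) (2 ^ r * q),
      (1 / (n : ℝ) ^ 2) * Real.exp (a * ∑ k ∈ Finset.Icc 1 n, ℓ k) ≤
      ∑' n : ℕ, (1 / (n : ℝ) ^ 2) * Real.exp (a * ∑ k ∈ Finset.Icc 1 n, ℓ k) := by
    apply Summable.sum_le_tsum _ (fun k _ => by positivity) hsum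
  linarith
end
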